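/- arXiv:2509.25421 — 5 statements merged into one kernel-verified Lean document; each statement's English description precedes it below -/
import Mathlib

section
/- For any n ∈ ℕ and any θ ∈ ℕ with θ ≥ 2, every bi-Lipschitz embedding of the complete graph K₄ into the tree W_{θ,n} has distortion at least 3/2. -/
open scoped symmDiff

/-- Condition for a pair `(l, r)` to encode a vertex of the subdivided tree `W_{θ,n}`:
`l` is the binary address (of length `k ≤ n`) of the nearest node at or below the vertex,
and `r` is the distance from the parent node of `l` along the subdivided edge into `l`
(`r = θ^(n-k)` is the node `l` itself); the root is `([], 0)`. -/
def WCond (θ n : ℕ) (p : List Bool × ℕ) : Prop :=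
  p.1.length ≤ n ∧ p.2 ≤ θ ^ n ∧ (p.1 = [] → p.2 = 0) ∧
    (p.1 ≠ [] → 1 ≤ p.2 ∧ p.2 ≤ θ ^ (n - p.1.length))

instance (θ n : ℕ) : DecidablePred (WCond θ n) := fun p => by unfold WCond; infer_instance

/-- Vertices of the tree `W_{θ,n}`. -/
def Wvertex (θ n : ℕ) : Type := { p : List Bool × ℕ // WCond θ n p }

instance (θ n : ℕ) : DecidableEq (Wvertex θ n) := Subtype.instDecidableEq

/-- Weighted depth of a node `l` of the binary tree `B_n` in `W_{θ,n}`: the sum of the lengths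
`θ^(n-i)` of the subdivided edges on the way from the root to `l`. -/
def wdepth (θ n : ℕ) (l : List Bool) : ℕ := ∑ i ∈ Finset.range l.length, θ ^ (n - (i + 1))

/-- Distance of a vertex of `W_{θ,n}` from the root. -/
def wheight (θ n : ℕ) (v : Wvertex θ n) : ℕ := wdepth θ n v.1.1.dropLast + v.1.2

/-- Longest common prefix of two lists. -/
def commonPrefix : List Bool → List Bool → List Bool
  | a :: as, b :: bs => if a = b then a :: commonPrefix as bs else []
  | _, _ => []

/-- The shortest path metric of the tree `W_{θ,n}`. -/
def Wdist (θ n : ℕ) (x y : Wvertex θ n) : ℕ :=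
  if x.1.1.isPrefixOf y.1.1 ∨ y.1.1.isPrefixOf x.1.1 then
    max (wheight θ n x) (wheight θ n y) - min (wheight θ n x) (wheight θ n y)
  else wheight θ n x + wheight θ n y - 2 * wdepth θ n (commonPrefix x.1.1 y.1.1)

/-- The root of `W_{θ,n}`. -/
def Wroot (θ n : ℕ) : Wvertex θ n := ⟨([], 0), by simp [WCond]⟩


lemma cp_nil_left (b : List Bool) : commonPrefix [] b = [] := by cases b <;> rfl
lemma cp_nil_right (a : List Bool) : commonPrefix a [] = [] := by cases a <;> rfl
lemma cp_cons_cons (a b : Bool) (as bs : List Bool) :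
    commonPrefix (a :: as) (b :: bs) = if a = b then a :: commonPrefix as bs else [] := rfl

lemma cp_prefix_left : ∀ a b : List Bool, commonPrefix a b <+: a
  | [], b => by simp [cp_nil_left]
  | a :: as, [] => by simp [cp_nil_right]
  | a :: as, b :: bs => by
      rw [cp_cons_cons]
      by_cases h : a = b
      · subst h; rw [if_pos rfl]
        exact List.cons_prefix_cons.mpr ⟨rfl, cp_prefix_left as bs⟩
      · rw [if_neg h]; exact List.nil_prefix

lemma cp_prefix_right : ∀ a b : List Bool, commonPrefix a b <+: b
  | [], b => by simp [cp_nil_left]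
  | a :: as, [] => by simp [cp_nil_right]
  | a :: as, b :: bs => by
      rw [cp_cons_cons]
      by_cases h : a = b
      · subst h; rw [if_pos rfl]
        exact List.cons_prefix_cons.mpr ⟨rfl, cp_prefix_right as bs⟩
      · rw [if_neg h]; exact List.nil_prefix

lemma cp_comm : ∀ a b : List Bool, commonPrefix a b = commonPrefix b a
  | [], b => by rw [cp_nil_left, cp_nil_right]
  | a :: as, [] => by rw [cp_nil_left, cp_nil_right]
  | a :: as, b :: bs => by
      rw [cp_cons_cons, cp_cons_cons]
      by_cases h : a = b
      · subst h; rw [if_pos rfl, if_pos rfl, cp_comm as bs]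
      · rw [if_neg h, if_neg (fun e => h e.symm)]

lemma prefix_cp : ∀ (a b p : List Bool), p <+: a → p <+: b → p <+: commonPrefix a b
  | _, _, [], _, _ => List.nil_prefix
  | a :: as, b :: bs, x :: p, h1, h2 => by
      obtain ⟨he1, h1'⟩ := List.cons_prefix_cons.mp h1
      obtain ⟨he2, h2'⟩ := List.cons_prefix_cons.mp h2
      subst he1; subst he2
      rw [cp_cons_cons, if_pos rfl]
      exact List.cons_prefix_cons.mpr ⟨rfl, prefix_cp as bs p h1' h2'⟩
  | [], _, x :: p, h1, _ => absurd h1 (by simp)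
  | _ :: _, [], x :: p, _, h2 => absurd h2 (by simp)

lemma cp_split : ∀ a b : List Bool, ¬ a <+: b → ¬ b <+: a →
    ∃ x y : Bool, x ≠ y ∧ commonPrefix a b ++ [x] <+: a ∧ commonPrefix a b ++ [y] <+: b
  | [], b, h1, _ => absurd (List.nil_prefix) h1
  | a :: as, [], _, h2 => absurd (List.nil_prefix) h2
  | a :: as, b :: bs, h1, h2 => by
      by_cases h : a = b
      · subst h
        have h1' : ¬ as <+: bs := fun hh => h1 (List.cons_prefix_cons.mpr ⟨rfl, hh⟩)
        have h2' : ¬ bs <+: as := fun hh => h2 (List.cons_prefix_cons.mpr ⟨rfl, hh⟩)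
        obtain ⟨x, y, hxy, hx, hy⟩ := cp_split as bs h1' h2'
        refine ⟨x, y, hxy, ?_, ?_⟩
        · rw [cp_cons_cons, if_pos rfl]
          exact List.cons_prefix_cons.mpr ⟨rfl, hx⟩
        · rw [cp_cons_cons, if_pos rfl]
          exact List.cons_prefix_cons.mpr ⟨rfl, hy⟩
      · refine ⟨a, b, h, ?_, ?_⟩ <;> rw [cp_cons_cons, if_neg h]
        · simpa using List.cons_prefix_cons.mpr ⟨rfl, List.nil_prefix⟩
        · simpa using List.cons_prefix_cons.mpr ⟨rfl, List.nil_prefix⟩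

lemma prefix_dropLast {p l : List Bool} (h : p <+: l) (hne : p ≠ l) : p <+: l.dropLast := by
  obtain ⟨t, rfl⟩ := h
  cases t with
  | nil => simp at hne
  | cons x ts =>
      rw [List.dropLast_append_of_ne_nil (List.cons_ne_nil x ts)]
      exact List.prefix_append _ _

lemma exists_next_bit {p l : List Bool} (h : p <+: l) (hne : l ≠ p) : ∃ β : Bool, p ++ [β] <+: l := by
  obtain ⟨t, rfl⟩ := h
  cases t with
  | nil => simp at hne
  | cons x ts => exact ⟨x, ⟨ts, by simp⟩⟩

def wdN (θ n m : ℕ) : ℕ := ∑ i ∈ Finset.range m, θ ^ (n - (i + 1))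

lemma wdN_succ (θ n m : ℕ) : wdN θ n (m+1) = wdN θ n m + θ^(n-(m+1)) := Finset.sum_range_succ _ _

lemma wdN_mono (θ n : ℕ) {m m' : ℕ} (h : m ≤ m') : wdN θ n m ≤ wdN θ n m' :=
  Finset.sum_le_sum_of_subset (Finset.range_subset_range.mpr h)

lemma wdN_pred (θ n : ℕ) {k : ℕ} (hk : 1 ≤ k) : wdN θ n k = wdN θ n (k-1) + θ^(n-k) := by
  have h : k - 1 + 1 = k := by omega
  conv_lhs => rw [← h]
  rw [wdN_succ, h]

lemma one_le_pow {θ : ℕ} (hθ : 2 ≤ θ) (e : ℕ) : 1 ≤ θ ^ e := Nat.one_le_pow _ _ (by omega)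

lemma pow_lt_pow_succ' {θ : ℕ} (hθ : 2 ≤ θ) (e : ℕ) : θ^e + 1 ≤ θ^(e+1) := by
  have h1 := one_le_pow hθ e
  have h2 : θ^e * 2 ≤ θ^e * θ := Nat.mul_le_mul_left _ hθ
  rw [pow_succ]
  omega

lemma wdN_pow_le {θ n : ℕ} (hθ : 2 ≤ θ) {k m : ℕ} (hkm : k ≤ m) (hmn : m ≤ n) :
    wdN θ n m + θ^(n-m) ≤ wdN θ n k + θ^(n-k) := by
  induction m, hkm using Nat.le_induction with
  | base => exact le_rfl
  | succ m hkm ih =>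
    have hmn' : m ≤ n := by omega
    have key : wdN θ n (m+1) + θ^(n-(m+1)) ≤ wdN θ n m + θ^(n-m) := by
      rw [wdN_succ]
      have h1 : n - m = (n - (m+1)) + 1 := by omega
      have h2 : θ^(n-(m+1)) * 2 ≤ θ^(n-(m+1)) * θ := Nat.mul_le_mul_left _ hθ
      rw [h1, pow_succ]
      omega
    exact key.trans (ih hmn')

section Vertex
variable {θ n : ℕ}

lemma wdepth_eq (l : List Bool) : wdepth θ n l = wdN θ n l.length := rfl

lemma wdepth_le_of_prefix {p q : List Bool} (h : p <+: q) : wdepth θ n p ≤ wdepth θ n q :=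
  wdN_mono θ n h.length_le

def Wmu (θ n : ℕ) (x y : Wvertex θ n) : ℕ :=
  if x.1.1.isPrefixOf y.1.1 ∨ y.1.1.isPrefixOf x.1.1 then
    min (wheight θ n x) (wheight θ n y)
  else wdepth θ n (commonPrefix x.1.1 y.1.1)

def WcmpP (x y : Wvertex θ n) : Prop := x.1.1 <+: y.1.1 ∨ y.1.1 <+: x.1.1

lemma cond_iff (x y : Wvertex θ n) :
    (x.1.1.isPrefixOf y.1.1 ∨ y.1.1.isPrefixOf x.1.1) ↔ WcmpP x y := by
  simp [WcmpP, List.isPrefixOf_iff_prefix]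

lemma mu_eq_pos {x y : Wvertex θ n} (h : WcmpP x y) :
    Wmu θ n x y = min (wheight θ n x) (wheight θ n y) := if_pos ((cond_iff x y).mpr h)

lemma mu_eq_neg {x y : Wvertex θ n} (h : ¬ WcmpP x y) :
    Wmu θ n x y = wdepth θ n (commonPrefix x.1.1 y.1.1) :=
  if_neg (fun hc => h ((cond_iff x y).mp hc))

lemma mu_comm (x y : Wvertex θ n) : Wmu θ n x y = Wmu θ n y x := by
  by_cases h : WcmpP x y
  · rw [mu_eq_pos h, mu_eq_pos (Or.symm h), min_comm]
  · rw [mu_eq_neg h, mu_eq_neg (fun hc => h (Or.symm hc)), cp_comm]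

lemma mu_le_left (x y : Wvertex θ n) : Wmu θ n x y ≤ wheight θ n x := by
  by_cases h : WcmpP x y
  · rw [mu_eq_pos h]; exact min_le_left _ _
  · rw [mu_eq_neg h]
    have h1 : commonPrefix x.1.1 y.1.1 <+: x.1.1 := cp_prefix_left _ _
    have h2 : commonPrefix x.1.1 y.1.1 ≠ x.1.1 := by
      intro he
      exact h (Or.inl (he ▸ cp_prefix_right x.1.1 y.1.1))
    calc wdepth θ n _ ≤ wdepth θ n x.1.1.dropLast := wdepth_le_of_prefix (prefix_dropLast h1 h2)
    _ ≤ wheight θ n x := Nat.le_add_right _ _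

lemma mu_le_right (x y : Wvertex θ n) : Wmu θ n x y ≤ wheight θ n y := by
  rw [mu_comm]; exact mu_le_left y x

lemma Wdist_cast (x y : Wvertex θ n) :
    (Wdist θ n x y : ℤ) = (wheight θ n x : ℤ) + wheight θ n y - 2 * Wmu θ n x y := by
  have h1 := mu_le_left x y
  have h2 := mu_le_right x y
  by_cases h : WcmpP x y
  · rw [Wdist, if_pos ((cond_iff x y).mpr h), mu_eq_pos h]
    rcases le_total (wheight θ n x) (wheight θ n y) with hh | hh
    · rw [max_eq_right hh, min_eq_left hh]; omega
    · rw [max_eq_left hh, min_eq_right hh]; omega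
  · rw [Wdist, if_neg (fun hc => h ((cond_iff x y).mp hc)), mu_eq_neg h]
    rw [mu_eq_neg h] at h1 h2
    omega

lemma Wdist_comm (x y : Wvertex θ n) : Wdist θ n x y = Wdist θ n y x := by
  have e1 := Wdist_cast x y
  have e2 := Wdist_cast y x
  rw [mu_comm x y] at e1
  omega

lemma height_le_wdepth (x : Wvertex θ n) : wheight θ n x ≤ wdepth θ n x.1.1 := by
  obtain ⟨⟨l, r⟩, hc⟩ := x
  by_cases hl : l = []
  · subst hl
    have : r = 0 := hc.2.2.1 rfl
    simp [wheight, this]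
  · have h1 : r ≤ θ ^ (n - l.length) := (hc.2.2.2 hl).2
    have h2 : 1 ≤ l.length := List.length_pos_iff.mpr hl
    show wdepth θ n l.dropLast + r ≤ wdepth θ n l
    rw [wdepth_eq, wdepth_eq, List.length_dropLast, wdN_pred θ n h2]
    omega

lemma wdepth_lt_height {p : List Bool} {x : Wvertex θ n} (hp : p <+: x.1.1) (hne : p ≠ x.1.1) :
    wdepth θ n p < wheight θ n x := by
  have hxne : x.1.1 ≠ [] := by
    intro h0
    rw [h0] at hp
    exact hne (by rw [List.prefix_nil.mp hp, h0])
  have hr : 1 ≤ x.1.2 := (x.2.2.2.2 hxne).1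
  have h4 := wdepth_le_of_prefix (θ := θ) (n := n) (prefix_dropLast hp hne)
  show wdepth θ n p < wdepth θ n x.1.1.dropLast + x.1.2
  omega

lemma wheight_pos {x : Wvertex θ n} (hx : x.1.1 ≠ []) : 1 ≤ wheight θ n x := by
  have hr := (x.2.2.2.2 hx).1
  show 1 ≤ wdepth θ n x.1.1.dropLast + x.1.2
  omega

lemma wheight_root {x : Wvertex θ n} (hx : x.1.1 = []) : wheight θ n x = 0 := by
  have hr := x.2.2.2.1 hx
  show wdepth θ n x.1.1.dropLast + x.1.2 = 0
  rw [hx, hr]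
  simp [wdepth]

lemma height_upper (hθ : 2 ≤ θ) {x : Wvertex θ n} {p : List Bool} {β : Bool}
    (hp : p ++ [β] <+: x.1.1) :
    wheight θ n x + 1 ≤ wdepth θ n p + θ ^ (n - p.length) := by
  have hk : p.length + 1 ≤ x.1.1.length := by
    have := hp.length_le
    simpa using this
  have hLn : x.1.1.length ≤ n := x.2.1
  have hxne : x.1.1 ≠ [] := by
    intro h0
    rw [h0] at hk
    simp at hk
  have hr : x.1.2 ≤ θ ^ (n - x.1.1.length) := (x.2.2.2.2 hxne).2
  have hA := wdN_pow_le (n := n) hθ (show p.length ≤ x.1.1.length - 1 by omega)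
    (show x.1.1.length - 1 ≤ n by omega)
  have hpow : θ^(n-x.1.1.length) + 1 ≤ θ^(n-(x.1.1.length-1)) := by
    have he : n - (x.1.1.length-1) = (n - x.1.1.length) + 1 := by omega
    rw [he]; exact pow_lt_pow_succ' hθ _
  have hwh : wheight θ n x = wdN θ n (x.1.1.length - 1) + x.1.2 := by
    show wdepth θ n x.1.1.dropLast + x.1.2 = _
    rw [wdepth_eq, List.length_dropLast]
  rw [wdepth_eq, hwh]
  omega

lemma mu_ultra_aux {x y z : Wvertex θ n} (hxy : WcmpP x y) (hyz : ¬ WcmpP y z) (hxz : ¬ WcmpP x z) :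
    min (Wmu θ n x y) (Wmu θ n y z) ≤ Wmu θ n x z := by
  have hcyz_y : commonPrefix y.1.1 z.1.1 <+: y.1.1 := cp_prefix_left _ _
  have hcyz_z : commonPrefix y.1.1 z.1.1 <+: z.1.1 := cp_prefix_right _ _
  rw [mu_eq_neg hyz, mu_eq_neg hxz]
  rcases hxy with hxy | hxy
  · rcases List.prefix_or_prefix_of_prefix hcyz_y hxy with hh | hh
    · have hc : commonPrefix y.1.1 z.1.1 <+: commonPrefix x.1.1 z.1.1 :=
        prefix_cp _ _ _ hh hcyz_z
      exact le_trans (min_le_right _ _) (wdepth_le_of_prefix hc)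
    · exact absurd (Or.inl (hh.trans hcyz_z)) hxz
  · have hc : commonPrefix y.1.1 z.1.1 <+: commonPrefix x.1.1 z.1.1 :=
      prefix_cp _ _ _ (hcyz_y.trans hxy) hcyz_z
    exact le_trans (min_le_right _ _) (wdepth_le_of_prefix hc)

lemma mu_ultra (x y z : Wvertex θ n) : min (Wmu θ n x y) (Wmu θ n y z) ≤ Wmu θ n x z := by
  by_cases hxz : WcmpP x z
  · rw [mu_eq_pos hxz]
    exact min_le_min (mu_le_left x y) (mu_le_right y z)
  by_cases hxy : WcmpP x y <;> by_cases hyz : WcmpP y z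
  · rcases hxy with h1 | h1 <;> rcases hyz with h2 | h2
    · exact absurd (Or.inl (h1.trans h2)) hxz
    · rcases List.prefix_or_prefix_of_prefix h1 h2 with hh | hh
      · exact absurd (Or.inl hh) hxz
      · exact absurd (Or.inr hh) hxz
    · rw [mu_eq_neg hxz]
      have hy : y.1.1 <+: commonPrefix x.1.1 z.1.1 := prefix_cp _ _ _ h1 h2
      calc min (Wmu θ n x y) (Wmu θ n y z) ≤ Wmu θ n x y := min_le_left _ _
      _ ≤ wheight θ n y := mu_le_right x y
      _ ≤ wdepth θ n y.1.1 := height_le_wdepth y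
      _ ≤ _ := wdepth_le_of_prefix hy
    · exact absurd (Or.inr (h2.trans h1)) hxz
  · exact mu_ultra_aux hxy hyz hxz
  · have h := mu_ultra_aux (x := z) (y := y) (z := x) (Or.symm hyz)
      (fun hc => hxy (Or.symm hc)) (fun hc => hxz (Or.symm hc))
    rw [mu_comm z y, mu_comm y x, mu_comm z x] at h
    rwa [min_comm] at h
  · rw [mu_eq_neg hxy, mu_eq_neg hyz, mu_eq_neg hxz]
    have c1y : commonPrefix x.1.1 y.1.1 <+: y.1.1 := cp_prefix_right _ _
    have c2y : commonPrefix y.1.1 z.1.1 <+: y.1.1 := cp_prefix_left _ _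
    rcases List.prefix_or_prefix_of_prefix c1y c2y with hh | hh
    · have hc : commonPrefix x.1.1 y.1.1 <+: commonPrefix x.1.1 z.1.1 :=
        prefix_cp _ _ _ (cp_prefix_left _ _) (hh.trans (cp_prefix_right _ _))
      exact le_trans (min_le_left _ _) (wdepth_le_of_prefix hc)
    · have hc : commonPrefix y.1.1 z.1.1 <+: commonPrefix x.1.1 z.1.1 :=
        prefix_cp _ _ _ (hh.trans (cp_prefix_left _ _)) (cp_prefix_right _ _)
      exact le_trans (min_le_right _ _) (wdepth_le_of_prefix hc)

end Vertex

section Vertex2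
variable {θ n : ℕ}
def CollP (θ n : ℕ) (P : Wvertex θ n → Prop) : Prop :=
  ∃ u v w : Wvertex θ n, P u ∧ P v ∧ P w ∧ u ≠ v ∧ v ≠ w ∧ u ≠ w ∧
    Wdist θ n u w = Wdist θ n u v + Wdist θ n v w

lemma Bprime (hθ : 2 ≤ θ) (P : Wvertex θ n → Prop) (o q s t : Wvertex θ n)
    (hPo : P o) (hPq : P q) (hPs : P s) (hPt : P t)
    (hoq : o ≠ q) (hos : o ≠ s) (hqs : q ≠ s) (hqt : q ≠ t)
    (hst : ¬ WcmpP s t)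
    (hm1 : Wmu θ n q s ≤ Wmu θ n s t) (hm2 : Wmu θ n q t ≤ Wmu θ n s t)
    (hm3 : Wmu θ n o s ≤ Wmu θ n s t) (hm4 : Wmu θ n o t ≤ Wmu θ n s t) :
    Wmu θ n q s ≤ wdepth θ n (commonPrefix s.1.1 t.1.1).dropLast ∨ CollP θ n P := by
  by_cases hsmall : Wmu θ n q s ≤ wdepth θ n (commonPrefix s.1.1 t.1.1).dropLast
  · exact Or.inl hsmall
  push_neg at hsmall
  right
  set bb := commonPrefix s.1.1 t.1.1 with hbbdef
  have hst1 : ¬ s.1.1 <+: t.1.1 := fun hh => hst (Or.inl hh)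
  have hst2 : ¬ t.1.1 <+: s.1.1 := fun hh => hst (Or.inr hh)
  obtain ⟨βs, βt, hβne, hsb, htb⟩ := cp_split _ _ hst1 hst2
  rw [← hbbdef] at hsb htb
  have hbbs : bb <+: s.1.1 := cp_prefix_left _ _
  have hbbt : bb <+: t.1.1 := cp_prefix_right _ _
  have hsne : bb ≠ s.1.1 := by
    intro he
    have l1 := hsb.length_le
    rw [← he] at l1
    simp at l1
  have htne : bb ≠ t.1.1 := by
    intro he
    have l1 := htb.length_le
    rw [← he] at l1
    simp at l1
  have hWst : Wmu θ n s t = wdepth θ n bb := mu_eq_neg hst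
  have hs_gt : wdepth θ n bb < wheight θ n s := wdepth_lt_height hbbs hsne
  have ht_gt : wdepth θ n bb < wheight θ n t := wdepth_lt_height hbbt htne
  have hstne : s ≠ t := by
    intro he
    rw [he] at hst
    exact hst (Or.inl (List.prefix_refl _))
  have hext : ∀ γ : Bool, wdepth θ n (bb ++ [γ]) = wdepth θ n bb + θ^(n - (bb.length+1)) := by
    intro γ
    rw [wdepth_eq, wdepth_eq]
    have : (bb ++ [γ]).length = bb.length + 1 := by simp
    rw [this, wdN_succ]
  have hm1' : Wmu θ n q s ≤ wdepth θ n bb := hm1.trans (le_of_eq hWst)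
  have hm2' : Wmu θ n q t ≤ wdepth θ n bb := hm2.trans (le_of_eq hWst)
  have hm3' : Wmu θ n o s ≤ wdepth θ n bb := hm3.trans (le_of_eq hWst)
  have hm4' : Wmu θ n o t ≤ wdepth θ n bb := hm4.trans (le_of_eq hWst)
  -- key sublemma
  have X : ∀ z : Wvertex θ n, Wmu θ n z s ≤ wdepth θ n bb →
      wdepth θ n bb.dropLast < Wmu θ n z s → Wmu θ n z t ≤ wdepth θ n bb →
      z.1.1 = bb ∧ Wmu θ n z s = wheight θ n z := by
    intro z h1 h2 h3
    by_cases hc : WcmpP z s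
    · have hmin := mu_eq_pos hc
      have hmu_z : Wmu θ n z s = wheight θ n z := by
        rcases le_total (wheight θ n z) (wheight θ n s) with hh | hh
        · rw [hmin, min_eq_left hh]
        · rw [hmin, min_eq_right hh] at h1
          omega
      refine ⟨?_, hmu_z⟩
      rcases hc with hzs | hsz
      · rcases List.prefix_or_prefix_of_prefix hzs hbbs with hh | hh
        · by_cases he : z.1.1 = bb
          · exact he
          · exfalso
            have hw := wdepth_le_of_prefix (θ := θ) (n := n) (prefix_dropLast hh he)
            have := height_le_wdepth z
            omega
        · by_cases he : z.1.1 = bb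
          · exact he
          · exfalso
            have := wdepth_lt_height hh (fun hee => he hee.symm)
            omega
      · exfalso
        have hbz : bb <+: z.1.1 := hbbs.trans hsz
        have hzne : bb ≠ z.1.1 := by
          intro he
          have l1 := hsb.length_le
          have l2 := hsz.length_le
          rw [← he] at l2
          simp at l1
          omega
        have := wdepth_lt_height hbz hzne
        have hg := hs_gt
        rw [mu_eq_pos (Or.inr hsz)] at h1
        rcases le_total (wheight θ n z) (wheight θ n s) with hh | hh
        · rw [min_eq_left hh] at h1; omega
        · rw [min_eq_right hh] at h1; omega
    · exfalso
      have hmu := mu_eq_neg hc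
      have hcs : commonPrefix z.1.1 s.1.1 <+: s.1.1 := cp_prefix_right _ _
      have hcz : commonPrefix z.1.1 s.1.1 <+: z.1.1 := cp_prefix_left _ _
      by_cases he : commonPrefix z.1.1 s.1.1 = bb
      · -- bb <+: z.1.1 strictly; next bit is βt; contradiction via Wmu z t
        have hbz : bb <+: z.1.1 := he ▸ hcz
        have hzbb : z.1.1 ≠ bb := by
          intro hee
          exact hc (Or.inl (by rw [hee]; exact hbbs))
        obtain ⟨β, hβ⟩ := exists_next_bit hbz hzbb
        have hβt : β = βt := by
          by_contra hne'
          have hβs : β = βs := by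
            rcases β <;> rcases βs <;> rcases βt <;> simp_all
          have h5 : bb ++ [βs] <+: commonPrefix z.1.1 s.1.1 :=
            prefix_cp _ _ _ (hβs ▸ hβ) hsb
          rw [he] at h5
          have := h5.length_le
          simp at this
        have hz_gt : wdepth θ n bb < wheight θ n z := wdepth_lt_height hbz (fun hee => hzbb hee.symm)
        by_cases hct : WcmpP z t
        · rw [mu_eq_pos hct] at h3
          rcases le_total (wheight θ n z) (wheight θ n t) with hh | hh
          · rw [min_eq_left hh] at h3; omega
          · rw [min_eq_right hh] at h3; omega
        · have h8 : bb ++ [βt] <+: commonPrefix z.1.1 t.1.1 :=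
            prefix_cp _ _ _ (hβt ▸ hβ) htb
          have h9 := wdepth_le_of_prefix (θ := θ) (n := n) h8
          rw [mu_eq_neg hct] at h3
          rw [hext βt] at h9
          have := one_le_pow hθ (n - (bb.length+1))
          omega
      · rcases List.prefix_or_prefix_of_prefix hcs hbbs with hh | hh
        · have := wdepth_le_of_prefix (θ := θ) (n := n) (prefix_dropLast hh he)
          omega
        · obtain ⟨γ, hγ⟩ := exists_next_bit hh he
          have h9 := wdepth_le_of_prefix (θ := θ) (n := n) hγ
          rw [hext γ] at h9
          have := one_le_pow hθ (n - (bb.length+1))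
          omega
  obtain ⟨hlq, hmuq⟩ := X q hm1' hsmall hm2'
  by_cases hqW : wheight θ n q = wdepth θ n bb
  · -- collinear triple (s, q, t)
    have hcq_t : WcmpP q t := Or.inl (by rw [hlq]; exact hbbt)
    have hqt_eq : Wmu θ n q t = wheight θ n q := by
      rw [mu_eq_pos hcq_t, min_eq_left]
      omega
    have hsq_eq : Wmu θ n s q = wheight θ n q := by rw [mu_comm]; exact hmuq
    refine ⟨s, q, t, hPs, hPq, hPt, Ne.symm hqs, hqt, hstne, ?_⟩
    have e1 := Wdist_cast (θ := θ) (n := n) s t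
    have e2 := Wdist_cast (θ := θ) (n := n) s q
    have e3 := Wdist_cast (θ := θ) (n := n) q t
    have hst_eq : Wmu θ n s t = wdepth θ n bb := hWst
    omega
  · have hq_lt : wheight θ n q < wdepth θ n bb := by
      have := hm1'
      rw [hmuq] at this
      omega
    rcases le_or_gt (Wmu θ n o s) (wheight θ n q) with hos_le | hos_gt
    · -- collinear triple (o, q, s)
      have u1 := mu_ultra o q s
      have u2 := mu_ultra o s q
      have hsq_eq : Wmu θ n s q = wheight θ n q := by rw [mu_comm]; exact hmuq
      have hoq_le : Wmu θ n o q ≤ wheight θ n q := mu_le_right o q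
      have heq : Wmu θ n o q = Wmu θ n o s := by
        rw [hmuq] at u1
        rw [hsq_eq] at u2
        rw [min_eq_left hoq_le] at u1
        rw [min_eq_left hos_le] at u2
        omega
      refine ⟨o, q, s, hPo, hPq, hPs, hoq, hqs, hos, ?_⟩
      have e1 := Wdist_cast (θ := θ) (n := n) o s
      have e2 := Wdist_cast (θ := θ) (n := n) o q
      have e3 := Wdist_cast (θ := θ) (n := n) q s
      omega
    · -- apply X to o, collinear triple (q, o, s)
      have hosW'' : wdepth θ n bb.dropLast < Wmu θ n o s := by
        rw [hmuq] at hsmall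
        omega
      obtain ⟨hlo, hmuo⟩ := X o hm3' hosW'' hm4'
      have hcqo : WcmpP q o := Or.inl (by rw [hlq, hlo])
      have hqo_eq : Wmu θ n q o = wheight θ n q := by
        rw [mu_eq_pos hcqo, min_eq_left]
        omega
      refine ⟨q, o, s, hPq, hPo, hPs, Ne.symm hoq, hos, hqs, ?_⟩
      have e1 := Wdist_cast (θ := θ) (n := n) q s
      have e2 := Wdist_cast (θ := θ) (n := n) q o
      have e3 := Wdist_cast (θ := θ) (n := n) o s
      omega
end Vertex2

section MainLem
variable {θ n : ℕ}

lemma mainlem (hθ : 2 ≤ θ) (a b c d : Wvertex θ n)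
    (hab : a ≠ b) (hac : a ≠ c) (had : a ≠ d) (hbc : b ≠ c) (hbd : b ≠ d) (hcd : c ≠ d)
    (h1 : Wmu θ n a c ≤ Wmu θ n c d) (h2 : Wmu θ n a d ≤ Wmu θ n c d)
    (h3 : Wmu θ n b c ≤ Wmu θ n c d) (h4 : Wmu θ n b d ≤ Wmu θ n c d) :
    CollP θ n (fun x => x = a ∨ x = b ∨ x = c ∨ x = d) ∨
      (Wdist θ n a b + 2 * Wdist θ n c d + 2 ≤ Wdist θ n a c + Wdist θ n b d) ∨
      (Wdist θ n a b + 2 * Wdist θ n c d + 2 ≤ Wdist θ n a d + Wdist θ n b c) := by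
  set P : Wvertex θ n → Prop := fun x => x = a ∨ x = b ∨ x = c ∨ x = d with hPdef
  have hPa : P a := Or.inl rfl
  have hPb : P b := Or.inr (Or.inl rfl)
  have hPc : P c := Or.inr (Or.inr (Or.inl rfl))
  have hPd : P d := Or.inr (Or.inr (Or.inr rfl))
  by_cases hcmp : WcmpP c d
  · left
    have u1 := mu_ultra a d c
    have u2 := mu_ultra a c d
    rw [mu_comm d c] at u1
    have hmm : Wmu θ n a c = Wmu θ n a d := by
      rw [min_eq_left h2] at u1
      rw [min_eq_left h1] at u2
      omega
    have hmcd := mu_eq_pos hcmp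
    rcases le_total (wheight θ n c) (wheight θ n d) with hh | hh
    · refine ⟨a, c, d, hPa, hPc, hPd, hac, hcd, had, ?_⟩
      have e1 := Wdist_cast (θ := θ) (n := n) a d
      have e2 := Wdist_cast (θ := θ) (n := n) a c
      have e3 := Wdist_cast (θ := θ) (n := n) c d
      have hcc : Wmu θ n c d = wheight θ n c := by rw [hmcd, min_eq_left hh]
      omega
    · refine ⟨a, d, c, hPa, hPd, hPc, had, Ne.symm hcd, hac, ?_⟩
      have e1 := Wdist_cast (θ := θ) (n := n) a c
      have e2 := Wdist_cast (θ := θ) (n := n) a d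
      have e3 := Wdist_cast (θ := θ) (n := n) d c
      have hdc : Wmu θ n d c = wheight θ n d := by
        rw [mu_comm d c, hmcd, min_eq_right hh]
      omega
  · have hc1 : ¬ c.1.1 <+: d.1.1 := fun hh => hcmp (Or.inl hh)
    have hc2 : ¬ d.1.1 <+: c.1.1 := fun hh => hcmp (Or.inr hh)
    set bb := commonPrefix c.1.1 d.1.1 with hbbdef
    obtain ⟨βc, βd, hβne, hcb, hdb⟩ := cp_split _ _ hc1 hc2
    rw [← hbbdef] at hcb hdb
    have hmucd : Wmu θ n c d = wdepth θ n bb := mu_eq_neg hcmp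
    by_cases hbb0 : bb = []
    · by_cases ha0 : a.1.1 = []
      · left
        refine ⟨c, a, d, hPc, hPa, hPd, Ne.symm hac, had, hcd, ?_⟩
        have hca : WcmpP c a := Or.inr (by rw [ha0]; exact List.nil_prefix)
        have had' : WcmpP a d := Or.inl (by rw [ha0]; exact List.nil_prefix)
        have hha : wheight θ n a = 0 := wheight_root ha0
        have e1 := Wdist_cast (θ := θ) (n := n) c d
        have e2 := Wdist_cast (θ := θ) (n := n) c a
        have e3 := Wdist_cast (θ := θ) (n := n) a d
        have m1 : Wmu θ n c a = 0 := by rw [mu_eq_pos hca, hha]; simp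
        have m2 : Wmu θ n a d = 0 := by rw [mu_eq_pos had', hha]; simp
        have m3 : Wmu θ n c d = 0 := by rw [hmucd, hbb0]; simp [wdepth]
        omega
      · exfalso
        obtain ⟨β, la', hla⟩ : ∃ β la', a.1.1 = β :: la' := by
          rcases hA : a.1.1 with _ | ⟨β, la'⟩
          · exact absurd hA ha0
          · exact ⟨β, la', rfl⟩
        rw [hbb0] at hcb hdb
        simp only [List.nil_append] at hcb hdb
        have hc_ne : c.1.1 ≠ [] := by
          intro h0
          rw [h0] at hcb
          exact absurd (List.prefix_nil.mp hcb) (by simp)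
        have hd_ne : d.1.1 ≠ [] := by
          intro h0
          rw [h0] at hdb
          exact absurd (List.prefix_nil.mp hdb) (by simp)
        have hcd0 : Wmu θ n c d = 0 := by rw [hmucd, hbb0]; simp [wdepth]
        have key : ∀ (e : Wvertex θ n) (βe : Bool), [βe] <+: e.1.1 → β = βe →
            e.1.1 ≠ [] → Wmu θ n a e ≤ 0 → False := by
          intro e βe hpre hβe hene hle
          by_cases hc : WcmpP a e
          · have p1 : 1 ≤ wheight θ n a := wheight_pos (by rw [hla]; simp)
            have p2 : 1 ≤ wheight θ n e := wheight_pos hene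
            rw [mu_eq_pos hc] at hle
            have : 1 ≤ min (wheight θ n a) (wheight θ n e) := le_min p1 p2
            omega
          · rw [mu_eq_neg hc] at hle
            have hpa : [βe] <+: a.1.1 := by
              rw [hla]
              exact List.cons_prefix_cons.mpr ⟨hβe.symm, List.nil_prefix⟩
            have hcp := wdepth_le_of_prefix (θ := θ) (n := n) (prefix_cp _ _ _ hpa hpre)
            have hw : wdepth θ n [βe] = θ^(n-1) := by
              rw [wdepth_eq]
              show wdN θ n (0+1) = _
              rw [wdN_succ]
              simp [wdN]
            have := one_le_pow hθ (n-1)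
            omega
        have hββ : β = βc ∨ β = βd := by
          rcases β <;> rcases βc <;> rcases βd <;> simp_all
        rcases hββ with hh | hh
        · exact key c βc hcb hh hc_ne (by omega)
        · exact key d βd hdb hh hd_ne (by omega)
    · -- main quantitative case
      have hk1 : 1 ≤ bb.length := List.length_pos_iff.mpr hbb0
      have hcmp' : ¬ WcmpP d c := fun hh => hcmp (Or.symm hh)
      have hdc_comm : Wmu θ n d c = Wmu θ n c d := mu_comm d c
      have hcpdc : commonPrefix d.1.1 c.1.1 = bb := by rw [cp_comm]
      rcases Bprime hθ P b a c d hPb hPa hPc hPd (Ne.symm hab) hbc hac had hcmp h1 h2 h3 h4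
        with B1 | B1
      swap
      · exact Or.inl B1
      rcases Bprime hθ P b a d c hPb hPa hPd hPc (Ne.symm hab) hbd had hac hcmp'
        (by rw [hdc_comm]; exact h2) (by rw [hdc_comm]; exact h1)
        (by rw [hdc_comm]; exact h4) (by rw [hdc_comm]; exact h3) with B2 | B2
      swap
      · exact Or.inl B2
      rcases Bprime hθ P a b c d hPa hPb hPc hPd hab hac hbc hbd hcmp h3 h4 h1 h2
        with B3 | B3
      swap
      · exact Or.inl B3
      rcases Bprime hθ P a b d c hPa hPb hPd hPc hab had hbd hbc hcmp'
        (by rw [hdc_comm]; exact h4) (by rw [hdc_comm]; exact h3)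
        (by rw [hdc_comm]; exact h2) (by rw [hdc_comm]; exact h1) with B4 | B4
      swap
      · exact Or.inl B4
      rw [hcpdc] at B2 B4
      -- B1 : Wmu a c ≤ wdepth bb.dropLast, B2 : Wmu a d ≤ _, B3 : Wmu b c ≤ _, B4 : Wmu b d ≤ _
      have hhc := height_upper (n := n) hθ (x := c) (p := bb) (β := βc) hcb
      have hhd := height_upper (n := n) hθ (x := d) (p := bb) (β := βd) hdb
      have hsplit : wdepth θ n bb = wdepth θ n bb.dropLast + θ^(n - bb.length) := by
        rw [wdepth_eq, wdepth_eq, List.length_dropLast]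
        exact wdN_pred θ n hk1
      rcases le_total (Wmu θ n a c) (Wmu θ n b c) with hmin | hmin
      · right; left
        have u := mu_ultra a c b
        have hu : Wmu θ n a c ≤ Wmu θ n a b := by
          rw [mu_comm c b, min_eq_left hmin] at u
          exact u
        have e1 := Wdist_cast (θ := θ) (n := n) a b
        have e2 := Wdist_cast (θ := θ) (n := n) c d
        have e3 := Wdist_cast (θ := θ) (n := n) a c
        have e4 := Wdist_cast (θ := θ) (n := n) b d
        omega
      · right; right
        have u := mu_ultra b c a
        have hu : Wmu θ n b c ≤ Wmu θ n a b := by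
          rw [mu_comm c a, min_eq_left hmin] at u
          rw [mu_comm b a] at u
          exact u
        have e1 := Wdist_cast (θ := θ) (n := n) a b
        have e2 := Wdist_cast (θ := θ) (n := n) c d
        have e3 := Wdist_cast (θ := θ) (n := n) a d
        have e4 := Wdist_cast (θ := θ) (n := n) b c
        omega
end MainLem

/-- for any `n` and `θ ≥ 2`, every bi-Lipschitz embedding of the complete graph
`K₄` (4 points at pairwise distance 1) into the tree `W_{θ,n}` has distortion at least `3/2`. -/
theorem K4_into_W_distortion (n θ : ℕ) (hθ : 2 ≤ θ) (f : Fin 4 → Wvertex θ n)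
    (hf : Function.Injective f) (C lam : ℝ) (hlam : 0 < lam)
    (h : ∀ u v : Fin 4, u ≠ v →
      lam ≤ (Wdist θ n (f u) (f v) : ℝ) ∧ (Wdist θ n (f u) (f v) : ℝ) ≤ C * lam) :
    (3 : ℝ) / 2 ≤ C := by
  classical
  have hne : ∀ i j : Fin 4, i ≠ j → f i ≠ f j := fun i j hij he => hij (hf he)
  have key : ∀ ia ib ic id : Fin 4, ia ≠ ib → ia ≠ ic → ia ≠ id → ib ≠ ic → ib ≠ id → ic ≠ id →
      Wmu θ n (f ia) (f ic) ≤ Wmu θ n (f ic) (f id) →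
      Wmu θ n (f ia) (f id) ≤ Wmu θ n (f ic) (f id) →
      Wmu θ n (f ib) (f ic) ≤ Wmu θ n (f ic) (f id) →
      Wmu θ n (f ib) (f id) ≤ Wmu θ n (f ic) (f id) → (3:ℝ)/2 ≤ C := by
    intro ia ib ic id nab nac nad nbc nbd ncd m1 m2 m3 m4
    rcases mainlem hθ (f ia) (f ib) (f ic) (f id) (hne _ _ nab) (hne _ _ nac) (hne _ _ nad)
      (hne _ _ nbc) (hne _ _ nbd) (hne _ _ ncd) m1 m2 m3 m4 with H | H | H
    · obtain ⟨u, v, w, hu, hv, hw, huv, hvw, huw, heq⟩ := H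
      have hex : ∀ x : Wvertex θ n,
          (x = f ia ∨ x = f ib ∨ x = f ic ∨ x = f id) → ∃ i, x = f i := by
        rintro x (hh | hh | hh | hh) <;> exact ⟨_, hh⟩
      obtain ⟨iu, rfl⟩ := hex u hu
      obtain ⟨iv, rfl⟩ := hex v hv
      obtain ⟨iw, rfl⟩ := hex w hw
      have nuv : iu ≠ iv := fun e => huv (by rw [e])
      have nvw : iv ≠ iw := fun e => hvw (by rw [e])
      have nuw : iu ≠ iw := fun e => huw (by rw [e])
      obtain ⟨l1, -⟩ := h iu iv nuv
      obtain ⟨l2, -⟩ := h iv iw nvw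
      obtain ⟨-, u3⟩ := h iu iw nuw
      have hcast : (Wdist θ n (f iu) (f iw) : ℝ) =
          (Wdist θ n (f iu) (f iv) : ℝ) + (Wdist θ n (f iv) (f iw) : ℝ) := by
        exact_mod_cast congrArg (fun m : ℕ => (m : ℝ)) heq
      nlinarith [hlam]
    · obtain ⟨l_ab, -⟩ := h ia ib nab
      obtain ⟨l_cd, -⟩ := h ic id ncd
      obtain ⟨-, u_ac⟩ := h ia ic nac
      obtain ⟨-, u_bd⟩ := h ib id nbd
      have hcast : (Wdist θ n (f ia) (f ib) : ℝ) + 2*(Wdist θ n (f ic) (f id) : ℝ) + 2 ≤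
          (Wdist θ n (f ia) (f ic) : ℝ) + (Wdist θ n (f ib) (f id) : ℝ) := by
        exact_mod_cast H
      nlinarith [hlam]
    · obtain ⟨l_ab, -⟩ := h ia ib nab
      obtain ⟨l_cd, -⟩ := h ic id ncd
      obtain ⟨-, u_ad⟩ := h ia id nad
      obtain ⟨-, u_bc⟩ := h ib ic nbc
      have hcast : (Wdist θ n (f ia) (f ib) : ℝ) + 2*(Wdist θ n (f ic) (f id) : ℝ) + 2 ≤
          (Wdist θ n (f ia) (f id) : ℝ) + (Wdist θ n (f ib) (f ic) : ℝ) := by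
        exact_mod_cast H
      nlinarith [hlam]
  obtain ⟨p, hp, hpmax⟩ := Finset.exists_max_image
    ({((0:Fin 4),(1:Fin 4)),(0,2),(0,3),(1,2),(1,3),(2,3)} : Finset (Fin 4 × Fin 4))
    (fun p => Wmu θ n (f p.1) (f p.2)) ⟨(0,1), by decide⟩
  simp only [Finset.mem_insert, Finset.mem_singleton] at hp
  have M : ∀ i j : Fin 4, Wmu θ n (f i) (f j) = Wmu θ n (f j) (f i) := fun i j => mu_comm _ _
  rcases hp with rfl | rfl | rfl | rfl | rfl | rfl
  · exact key 2 3 0 1 (by decide) (by decide) (by decide) (by decide) (by decide) (by decide)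
      (by rw [M 2 0]; exact hpmax (0,2) (by decide)) (by rw [M 2 1]; exact hpmax (1,2) (by decide))
      (by rw [M 3 0]; exact hpmax (0,3) (by decide)) (by rw [M 3 1]; exact hpmax (1,3) (by decide))
  · exact key 1 3 0 2 (by decide) (by decide) (by decide) (by decide) (by decide) (by decide)
      (by rw [M 1 0]; exact hpmax (0,1) (by decide)) (hpmax (1,2) (by decide))
      (by rw [M 3 0]; exact hpmax (0,3) (by decide)) (by rw [M 3 2]; exact hpmax (2,3) (by decide))
  · exact key 1 2 0 3 (by decide) (by decide) (by decide) (by decide) (by decide) (by decide)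
      (by rw [M 1 0]; exact hpmax (0,1) (by decide)) (hpmax (1,3) (by decide))
      (by rw [M 2 0]; exact hpmax (0,2) (by decide)) (hpmax (2,3) (by decide))
  · exact key 0 3 1 2 (by decide) (by decide) (by decide) (by decide) (by decide) (by decide)
      (hpmax (0,1) (by decide)) (hpmax (0,2) (by decide))
      (by rw [M 3 1]; exact hpmax (1,3) (by decide)) (by rw [M 3 2]; exact hpmax (2,3) (by decide))
  · exact key 0 2 1 3 (by decide) (by decide) (by decide) (by decide) (by decide) (by decide)
      (hpmax (0,1) (by decide)) (hpmax (0,3) (by decide))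
      (by rw [M 2 1]; exact hpmax (1,2) (by decide)) (hpmax (2,3) (by decide))
  · exact key 0 1 2 3 (by decide) (by decide) (by decide) (by decide) (by decide) (by decide)
      (hpmax (0,2) (by decide)) (hpmax (0,3) (by decide))
      (hpmax (1,2) (by decide)) (hpmax (1,3) (by decide))
end

section
/- For any n ∈ ℕ and θ ∈ ℕ with θ ≥ 2, every bi-Lipschitz embedding of K₄ into the weighted complete binary tree WB_{θ,n} has distortion at least 3/2. -/
/-- Vertices of the weighted complete binary tree `WB_{θ,n}`: binary addresses of length
at most `n`. -/
def WBvertex (n : ℕ) : Type := { l : List Bool // l.length ≤ n }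

/-- The weighted shortest path metric on `WB_{θ,n}`: the distance between two vertices is
the total weight of the path between them through their last common ancestor. -/
def WBdist (θ n : ℕ) (u v : WBvertex n) : ℕ :=
  wdepth θ n u.1 + wdepth θ n v.1 - 2 * wdepth θ n (commonPrefix u.1 v.1)

namespace K4WB

/-! ### commonPrefix lemmas -/

@[simp] lemma cp_nil_left (b : List Bool) : commonPrefix [] b = [] := by
  cases b <;> rfl

@[simp] lemma cp_nil_right (a : List Bool) : commonPrefix a [] = [] := by
  cases a <;> rfl

@[simp] lemma cp_cons (a b : Bool) (as bs : List Bool) :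
    commonPrefix (a :: as) (b :: bs) = if a = b then a :: commonPrefix as bs else [] := rfl

lemma cp_prefix_left : ∀ a b : List Bool, commonPrefix a b <+: a
  | [], _ => by simp
  | _ :: _, [] => by simp
  | a :: as, b :: bs => by
      by_cases h : a = b
      · simpa [h] using (cp_prefix_left as bs)
      · simp [h]

lemma cp_prefix_right : ∀ a b : List Bool, commonPrefix a b <+: b
  | [], _ => by simp
  | _ :: _, [] => by simp
  | a :: as, b :: bs => by
      by_cases h : a = b
      · subst h; simpa using (cp_prefix_right as bs)
      · simp [h]

lemma cp_comm : ∀ a b : List Bool, commonPrefix a b = commonPrefix b a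
  | [], b => by simp
  | _ :: _, [] => by simp
  | a :: as, b :: bs => by
      by_cases h : a = b
      · subst h; simp [cp_comm as bs]
      · simp [h, Ne.symm h]

lemma prefix_cp : ∀ (c a b : List Bool), c <+: a → c <+: b → c <+: commonPrefix a b
  | [], _, _, _, _ => List.nil_prefix
  | hc :: tc, a, b, ha, hb => by
      obtain ⟨ta, rfl⟩ := ha
      obtain ⟨tb, rfl⟩ := hb
      simp only [List.cons_append, cp_cons, if_pos rfl]
      exact List.cons_prefix_cons.mpr ⟨rfl,
        prefix_cp tc _ _ (List.prefix_append _ _) (List.prefix_append _ _)⟩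

lemma cp_eq_right {u y : List Bool} (h : y <+: u) : commonPrefix u y = y := by
  have h1 : y <+: commonPrefix u y := prefix_cp y u y h List.prefix_rfl
  exact ((cp_prefix_right u y).eq_of_length
    (le_antisymm (cp_prefix_right u y).length_le h1.length_le)).symm ▸
    (h1.eq_of_length (le_antisymm h1.length_le (cp_prefix_right u y).length_le)).symm

lemma L1 : ∀ a b z : List Bool,
    (commonPrefix a z).length < (commonPrefix a b).length → commonPrefix b z = commonPrefix a z
  | [], b, z, h => by simp at h
  | _ :: _, [], z, h => by simp at h
  | a :: as, b :: bs, [], h => by simp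
  | a :: as, b :: bs, z :: zs, h => by
      by_cases hab : a = b
      · subst hab
        by_cases haz : a = z
        · subst haz
          rw [cp_cons, if_pos rfl, cp_cons, if_pos rfl] at h
          rw [cp_cons, if_pos rfl, cp_cons, if_pos rfl]
          simp only [List.length_cons, Nat.succ_lt_succ_iff] at h
          exact congrArg _ (L1 as bs zs h)
        · simp [haz]
      · simp [hab] at h

lemma cp_append : ∀ (c u v : List Bool),
    commonPrefix (c ++ u) (c ++ v) = c ++ commonPrefix u v
  | [], _, _ => rfl
  | hc :: tc, u, v => by simp [cp_append tc u v]

lemma cp_nil_head {p q : Bool} {l m : List Bool} (h : commonPrefix (p :: l) (q :: m) = []) :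
    p ≠ q := by
  intro he; subst he; simp at h

lemma prefix_eq_of_length {p q l : List Bool} (h1 : p <+: l) (h2 : q <+: l)
    (h : p.length = q.length) : p = q :=
  (List.prefix_of_prefix_length_le h1 h2 h.le).eq_of_length h

/-! ### weighted depth -/

def Wf (θ n L : ℕ) : ℕ := ∑ i ∈ Finset.range L, θ ^ (n - (i + 1))

lemma wdepth_eq (θ n : ℕ) (l : List Bool) : wdepth θ n l = Wf θ n l.length := rfl

lemma Wf_mono (θ n : ℕ) {a b : ℕ} (h : a ≤ b) : Wf θ n a ≤ Wf θ n b :=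
  Finset.sum_le_sum_of_subset (Finset.range_subset_range.mpr h)

lemma geomB {θ : ℕ} (hθ : 2 ≤ θ) : ∀ k : ℕ, (∑ i ∈ Finset.range (k + 1), θ ^ i) + 1 ≤ 2 * θ ^ k
  | 0 => by simp
  | k + 1 => by
      have ih := geomB hθ k
      rw [Finset.sum_range_succ]
      have h2 : 2 * θ ^ k ≤ θ ^ (k + 1) := by
        rw [pow_succ]
        calc 2 * θ ^ k = θ ^ k * 2 := by ring
        _ ≤ θ ^ k * θ := Nat.mul_le_mul_left _ hθ
      omega

lemma estB {θ n k m : ℕ} (h : k < m) : Wf θ n k + θ ^ (n - m) ≤ Wf θ n m := by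
  obtain ⟨m0, rfl⟩ : ∃ m0, m = m0 + 1 := ⟨m - 1, by omega⟩
  have h1 : Wf θ n k ≤ Wf θ n m0 := Wf_mono θ n (by omega)
  have h2 : Wf θ n (m0 + 1) = Wf θ n m0 + θ ^ (n - (m0 + 1)) := Finset.sum_range_succ _ _
  omega

lemma estA {θ n m L : ℕ} (hθ : 2 ≤ θ) (hmn : m < n) (hmL : m ≤ L) (hLn : L ≤ n) :
    Wf θ n L + 1 ≤ Wf θ n m + 2 * θ ^ (n - m - 1) := by
  have hsplit : Wf θ n m + ∑ i ∈ Finset.Ico m L, θ ^ (n - (i + 1)) = Wf θ n L := by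
    rw [Wf, Wf, Finset.range_eq_Ico, Finset.range_eq_Ico]
    exact Finset.sum_Ico_consecutive (fun i => θ ^ (n - (i + 1))) (Nat.zero_le m) hmL
  have hsub : (∑ i ∈ Finset.Ico m L, θ ^ (n - (i + 1))) ≤
      ∑ i ∈ Finset.Ico m n, θ ^ (n - (i + 1)) :=
    Finset.sum_le_sum_of_subset (Finset.Ico_subset_Ico le_rfl hLn)
  have hre : (∑ i ∈ Finset.Ico m n, θ ^ (n - (i + 1))) =
      ∑ i ∈ Finset.range (n - m), θ ^ (n - m - 1 - i) := by
    rw [Finset.sum_Ico_eq_sum_range]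
    exact Finset.sum_congr rfl fun i hi => by
      rw [Finset.mem_range] at hi
      congr 1
      omega
  have href : (∑ i ∈ Finset.range (n - m), θ ^ (n - m - 1 - i)) =
      ∑ i ∈ Finset.range (n - m), θ ^ i :=
    Finset.sum_range_reflect (fun i => θ ^ i) (n - m)
  obtain ⟨k, hk⟩ : ∃ k, n - m = k + 1 := ⟨n - m - 1, by omega⟩
  have hgeom := geomB hθ k
  have hk1 : n - m - 1 = k := by omega
  rw [hre, href, hk] at hsub
  rw [hk1]
  omega

/-- the distance, on lists -/
def mD (θ n : ℕ) (u v : List Bool) : ℕ :=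
  wdepth θ n u + wdepth θ n v - 2 * wdepth θ n (commonPrefix u v)

lemma mD_eq (θ n : ℕ) (u v : List Bool) :
    mD θ n u v = Wf θ n u.length + Wf θ n v.length - 2 * Wf θ n (commonPrefix u v).length := rfl

/-- three points on a chain: `y` between `u` and `v`. -/
lemma chain (θ n : ℕ) (u v y : List Bool) (hy : commonPrefix u v = y)
    (hyu : y <+: u) (hyv : y <+: v) :
    3 * mD θ n u y ≤ 2 * mD θ n u v ∨ 3 * mD θ n v y ≤ 2 * mD θ n u v := by
  have e1 : commonPrefix u y = y := cp_eq_right hyu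
  have e2 : commonPrefix v y = y := cp_eq_right hyv
  have m1 : Wf θ n y.length ≤ Wf θ n u.length := Wf_mono θ n hyu.length_le
  have m2 : Wf θ n y.length ≤ Wf θ n v.length := Wf_mono θ n hyv.length_le
  rcases le_total (Wf θ n u.length) (Wf θ n v.length) with hle | hle
  · left; rw [mD_eq, mD_eq, hy, e1]; omega
  · right; rw [mD_eq, mD_eq, hy, e2]; omega

lemma core (θ n : ℕ) (hθ : 2 ≤ θ) (x : Fin 4 → List Bool) (u0 u1 u2 u3 : Fin 4)
    (h01 : u0 ≠ u1) (h02 : u0 ≠ u2) (h03 : u0 ≠ u3) (h12 : u1 ≠ u2) (h13 : u1 ≠ u3)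
    (h23 : u2 ≠ u3)
    (hxne : ∀ i j : Fin 4, i ≠ j → x i ≠ x j)
    (hlen : ∀ i : Fin 4, (x i).length ≤ n)
    (hmax : ∀ i j : Fin 4, i ≠ j →
      (commonPrefix (x i) (x j)).length ≤ (commonPrefix (x u0) (x u1)).length)
    (hzw : (commonPrefix (x u0) (x u3)).length ≤ (commonPrefix (x u0) (x u2)).length) :
    ∃ k l i j : Fin 4, k ≠ l ∧ i ≠ j ∧ 3 * mD θ n (x i) (x j) ≤ 2 * mD θ n (x k) (x l) := by
  by_cases hA : (commonPrefix (x u0) (x u2)).length = (commonPrefix (x u0) (x u1)).length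
  · -- Case A : the pair (u0,u2) also realizes the maximum: three points hang below c
    have e1 : commonPrefix (x u0) (x u2) = commonPrefix (x u0) (x u1) :=
      prefix_eq_of_length (cp_prefix_left _ _) (cp_prefix_left _ _) hA
    have hca : commonPrefix (x u0) (x u1) <+: x u0 := cp_prefix_left _ _
    have hcb : commonPrefix (x u0) (x u1) <+: x u1 := cp_prefix_right _ _
    have hcz : commonPrefix (x u0) (x u1) <+: x u2 := e1 ▸ cp_prefix_right (x u0) (x u2)
    have e2 : commonPrefix (x u1) (x u2) = commonPrefix (x u0) (x u1) := by
      have hpre : commonPrefix (x u0) (x u1) <+: commonPrefix (x u1) (x u2) :=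
        prefix_cp _ _ _ hcb hcz
      exact (hpre.eq_of_length (le_antisymm hpre.length_le (hmax u1 u2 h12))).symm
    by_cases ha : x u0 = commonPrefix (x u0) (x u1)
    · rcases chain θ n (x u1) (x u2) (x u0) (by rw [e2]; exact ha.symm) (ha ▸ hcb) (ha ▸ hcz) with hle | hle
      · exact ⟨u1, u2, u1, u0, h12, h01.symm, hle⟩
      · exact ⟨u1, u2, u2, u0, h12, h02.symm, hle⟩
    by_cases hb : x u1 = commonPrefix (x u0) (x u1)
    · rcases chain θ n (x u0) (x u2) (x u1) (by rw [e1]; exact hb.symm) (hb ▸ hca) (hb ▸ hcz) with hle | hle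
      · exact ⟨u0, u2, u0, u1, h02, h01, hle⟩
      · exact ⟨u0, u2, u2, u1, h02, h12.symm, hle⟩
    by_cases hz : x u2 = commonPrefix (x u0) (x u1)
    · rcases chain θ n (x u0) (x u1) (x u2) hz.symm (hz ▸ hca) (hz ▸ hcb) with hle | hle
      · exact ⟨u0, u1, u0, u2, h01, h02, hle⟩
      · exact ⟨u0, u1, u1, u2, h01, h12, hle⟩
    · exfalso
      obtain ⟨ta, hta⟩ := hca
      obtain ⟨tb, htb⟩ := hcb
      obtain ⟨tz, htz⟩ := hcz
      have hta' : ta ≠ [] := by rintro rfl; exact ha (by simpa using hta.symm)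
      have htb' : tb ≠ [] := by rintro rfl; exact hb (by simpa using htb.symm)
      have htz' : tz ≠ [] := by rintro rfl; exact hz (by simpa using htz.symm)
      obtain ⟨pa, ta', rfl⟩ := List.exists_cons_of_ne_nil hta'
      obtain ⟨pb, tb', rfl⟩ := List.exists_cons_of_ne_nil htb'
      obtain ⟨pz, tz', rfl⟩ := List.exists_cons_of_ne_nil htz'
      have key : ∀ (s t : List Bool),
          commonPrefix (commonPrefix (x u0) (x u1) ++ s) (commonPrefix (x u0) (x u1) ++ t) =
            commonPrefix (x u0) (x u1) → commonPrefix s t = [] := by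
        intro s t hst
        rw [cp_append] at hst
        have := List.append_cancel_left (hst.trans (List.append_nil _).symm)
        exact this
      have k1 : pa ≠ pb := cp_nil_head (key _ _ (by rw [hta, htb]))
      have k2 : pa ≠ pz := cp_nil_head (key _ _ (by rw [hta, htz, e1]))
      have k3 : pb ≠ pz := cp_nil_head (key _ _ (by rw [htb, htz, e2]))
      cases pa <;> cases pb <;> cases pz <;> simp_all
  · -- Case B
    have hmz_lt : (commonPrefix (x u0) (x u2)).length < (commonPrefix (x u0) (x u1)).length :=
      lt_of_le_of_ne (hmax u0 u2 h02) hA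
    have hmw_lt : (commonPrefix (x u0) (x u3)).length < (commonPrefix (x u0) (x u1)).length :=
      lt_of_le_of_lt hzw hmz_lt
    have ebw : commonPrefix (x u1) (x u3) = commonPrefix (x u0) (x u3) := L1 _ _ _ hmw_lt
    have hwc_zc : commonPrefix (x u0) (x u3) <+: commonPrefix (x u0) (x u2) :=
      List.prefix_of_prefix_length_le (cp_prefix_left _ _) (cp_prefix_left _ _) hzw
    have hm' : commonPrefix (x u0) (x u3) <+: commonPrefix (x u2) (x u3) :=
      prefix_cp _ _ _ (hwc_zc.trans (cp_prefix_right _ _)) (cp_prefix_right _ _)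
    have hmLa : (commonPrefix (x u0) (x u1)).length ≤ (x u0).length :=
      (cp_prefix_left _ _).length_le
    have hmLb : (commonPrefix (x u0) (x u1)).length ≤ (x u1).length :=
      (cp_prefix_right _ _).length_le
    have hmn : (commonPrefix (x u0) (x u1)).length < n := by
      by_contra hcon
      push_neg at hcon
      have ha0 := hlen u0
      have ha1 := hlen u1
      have e0 : commonPrefix (x u0) (x u1) = x u0 :=
        (cp_prefix_left _ _).eq_of_length (by omega)
      have e1' : commonPrefix (x u0) (x u1) = x u1 :=
        (cp_prefix_right _ _).eq_of_length (by omega)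
      exact hxne u0 u1 h01 (e0.symm.trans e1')
    have f1 : Wf θ n (commonPrefix (x u0) (x u2)).length
        + θ ^ (n - (commonPrefix (x u0) (x u1)).length)
        ≤ Wf θ n (commonPrefix (x u0) (x u1)).length := estB hmz_lt
    have f2 : Wf θ n (x u0).length + 1 ≤ Wf θ n (commonPrefix (x u0) (x u1)).length
        + 2 * θ ^ (n - (commonPrefix (x u0) (x u1)).length - 1) :=
      estA hθ hmn hmLa (hlen u0)
    have f3 : Wf θ n (x u1).length + 1 ≤ Wf θ n (commonPrefix (x u0) (x u1)).length
        + 2 * θ ^ (n - (commonPrefix (x u0) (x u1)).length - 1) :=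
      estA hθ hmn hmLb (hlen u1)
    have f4 : Wf θ n (commonPrefix (x u0) (x u3)).length
        ≤ Wf θ n (commonPrefix (x u2) (x u3)).length := Wf_mono θ n hm'.length_le
    have f5 : 2 * θ ^ (n - (commonPrefix (x u0) (x u1)).length - 1)
        ≤ θ ^ (n - (commonPrefix (x u0) (x u1)).length) := by
      have hk : n - (commonPrefix (x u0) (x u1)).length
          = (n - (commonPrefix (x u0) (x u1)).length - 1) + 1 := by omega
      rw [hk, pow_succ]
      calc 2 * θ ^ (n - (commonPrefix (x u0) (x u1)).length - 1)
          = θ ^ (n - (commonPrefix (x u0) (x u1)).length - 1) * 2 := by ring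
        _ ≤ _ := Nat.mul_le_mul_left _ hθ
    have f6 : 1 ≤ θ ^ (n - (commonPrefix (x u0) (x u1)).length - 1) :=
      Nat.one_le_pow _ _ (by omega)
    have g1 : Wf θ n (commonPrefix (x u0) (x u2)).length ≤ Wf θ n (x u0).length :=
      Wf_mono θ n (cp_prefix_left _ _).length_le
    have g2 : Wf θ n (commonPrefix (x u0) (x u2)).length ≤ Wf θ n (x u2).length :=
      Wf_mono θ n (cp_prefix_right _ _).length_le
    have g3 : Wf θ n (commonPrefix (x u0) (x u3)).length ≤ Wf θ n (x u1).length :=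
      Wf_mono θ n (le_trans (le_of_lt hmw_lt) hmLb)
    have g4 : Wf θ n (commonPrefix (x u0) (x u3)).length ≤ Wf θ n (x u3).length :=
      Wf_mono θ n (cp_prefix_right _ _).length_le
    have g5 : Wf θ n (commonPrefix (x u0) (x u1)).length ≤ Wf θ n (x u0).length :=
      Wf_mono θ n hmLa
    have g6 : Wf θ n (commonPrefix (x u0) (x u1)).length ≤ Wf θ n (x u1).length :=
      Wf_mono θ n hmLb
    have g7 : Wf θ n (commonPrefix (x u2) (x u3)).length ≤ Wf θ n (x u2).length :=
      Wf_mono θ n (cp_prefix_left _ _).length_le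
    have g8 : Wf θ n (commonPrefix (x u2) (x u3)).length ≤ Wf θ n (x u3).length :=
      Wf_mono θ n (cp_prefix_right _ _).length_le
    have feq : Wf θ n (commonPrefix (x u1) (x u3)).length
        = Wf θ n (commonPrefix (x u0) (x u3)).length := by rw [ebw]
    rcases le_total (mD θ n (x u0) (x u2)) (mD θ n (x u1) (x u3)) with hbig | hbig <;>
      rcases le_total (mD θ n (x u0) (x u1)) (mD θ n (x u2) (x u3)) with hsmall | hsmall
    · refine ⟨u1, u3, u0, u1, h13, h01, ?_⟩
      simp only [mD_eq] at hbig hsmall ⊢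
      omega
    · refine ⟨u1, u3, u2, u3, h13, h23, ?_⟩
      simp only [mD_eq] at hbig hsmall ⊢
      omega
    · refine ⟨u0, u2, u0, u1, h02, h01, ?_⟩
      simp only [mD_eq] at hbig hsmall ⊢
      omega
    · refine ⟨u0, u2, u2, u3, h02, h23, ?_⟩
      simp only [mD_eq] at hbig hsmall ⊢
      omega

end K4WB

/-- for any `n` and `θ ≥ 2`, every bi-Lipschitz embedding of the complete graph
`K₄` (4 points at pairwise distance 1) into the weighted complete binary tree `WB_{θ,n}`
has distortion at least `3/2`. -/
theorem K4_into_WB_distortion (n θ : ℕ) (hθ : 2 ≤ θ) (f : Fin 4 → WBvertex n)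
    (hf : Function.Injective f) (C lam : ℝ) (hlam : 0 < lam)
    (h : ∀ u v : Fin 4, u ≠ v →
      lam ≤ (WBdist θ n (f u) (f v) : ℝ) ∧ (WBdist θ n (f u) (f v) : ℝ) ≤ C * lam) :
    (3 : ℝ) / 2 ≤ C := by
  classical
  set x : Fin 4 → List Bool := fun i => (f i).1 with hx
  have hxne : ∀ i j : Fin 4, i ≠ j → x i ≠ x j := by
    intro i j hij hxe
    exact hij (hf (Subtype.ext hxe))
  have hlen : ∀ i : Fin 4, (x i).length ≤ n := fun i => (f i).2
  obtain ⟨⟨i0, j0⟩, hp, hpmax⟩ := Finset.exists_max_image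
    (Finset.univ.filter fun p : Fin 4 × Fin 4 => p.1 ≠ p.2)
    (fun p => (commonPrefix (x p.1) (x p.2)).length)
    ⟨((0 : Fin 4), (1 : Fin 4)), by simp⟩
  simp only [Finset.mem_filter, Finset.mem_univ, true_and] at hp
  have hmax' : ∀ i j : Fin 4, i ≠ j →
      (commonPrefix (x i) (x j)).length ≤ (commonPrefix (x i0) (x j0)).length := by
    intro i j hij
    exact hpmax (i, j) (by simp [hij])
  have hcard : 1 < ({i0, j0}ᶜ : Finset (Fin 4)).card := by
    rw [Finset.card_compl, Finset.card_pair hp, Fintype.card_fin]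
    norm_num
  obtain ⟨u2, u3, hu2, hu3, h23⟩ := Finset.one_lt_card_iff.mp hcard
  simp only [Finset.mem_compl, Finset.mem_insert, Finset.mem_singleton, not_or] at hu2 hu3
  have key : ∃ k l i j : Fin 4, k ≠ l ∧ i ≠ j ∧
      3 * K4WB.mD θ n (x i) (x j) ≤ 2 * K4WB.mD θ n (x k) (x l) := by
    rcases le_total ((commonPrefix (x i0) (x u3)).length) ((commonPrefix (x i0) (x u2)).length)
      with hz | hz
    · exact K4WB.core θ n hθ x i0 j0 u2 u3 hp (Ne.symm hu2.1) (Ne.symm hu3.1)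
        (Ne.symm hu2.2) (Ne.symm hu3.2) h23 hxne hlen hmax' hz
    · exact K4WB.core θ n hθ x i0 j0 u3 u2 hp (Ne.symm hu3.1) (Ne.symm hu2.1)
        (Ne.symm hu3.2) (Ne.symm hu2.2) (Ne.symm h23) hxne hlen hmax' hz
  obtain ⟨k, l, i, j, hkl, hij, hle⟩ := key
  have hDe1 : WBdist θ n (f i) (f j) = K4WB.mD θ n (x i) (x j) := rfl
  have hDe2 : WBdist θ n (f k) (f l) = K4WB.mD θ n (x k) (x l) := rfl
  have hcast : 3 * (WBdist θ n (f i) (f j) : ℝ) ≤ 2 * (WBdist θ n (f k) (f l) : ℝ) := by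
    rw [hDe1, hDe2]
    exact_mod_cast hle
  obtain ⟨hlow, -⟩ := h i j hij
  obtain ⟨-, hupp⟩ := h k l hkl
  nlinarith [hlow, hupp, hcast, hlam]
end

section
/- Let (M_n) be a sequence of metric spaces such that for every n, every embedding of K₄ into M_n has distortion at least 3/2. Then the sequence of complete graphs (K_k) does not equi-bi-Lipschitzly embed into (M_n): for every C ≥ 1 there exists k such that for every n, every embedding of K_k into M_n has distortion greater than C. -/
open Finset

lemma exists_chain {α : Type*} [DecidableEq α] (r : ℕ) (hr : 2 ≤ r) (χ : α → α → ℕ)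
    (hχ : ∀ a b, χ a b < r) :
    ∀ (L : ℕ) (S : Finset α), r ^ L ≤ S.card →
      ∃ (x : Fin L → α) (c : Fin L → ℕ), Function.Injective x ∧ (∀ i, x i ∈ S) ∧
        (∀ i, c i < r) ∧ ∀ i j : Fin L, i < j → χ (x i) (x j) = c i := by
  intro L
  induction L with
  | zero =>
    intro S _
    exact ⟨Fin.elim0, Fin.elim0, fun i => i.elim0, fun i => i.elim0,
      fun i => i.elim0, fun i => i.elim0⟩
  | succ L ih =>
    intro S hS
    have hSne : S.Nonempty := by
      rw [← Finset.card_pos]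
      calc 0 < r ^ (L + 1) := pow_pos (by omega) _
      _ ≤ S.card := hS
    obtain ⟨a, ha⟩ := hSne
    -- find a popular color
    have key : ∃ c0 < r, r ^ L ≤ ((S.erase a).filter fun b => χ a b = c0).card := by
      by_contra hcon
      push_neg at hcon
      have hsum : (S.erase a).card = ∑ c ∈ Finset.range r,
          ((S.erase a).filter fun b => χ a b = c).card :=
        Finset.card_eq_sum_card_fiberwise fun b _ => Finset.mem_range.2 (hχ a b)
      have hle : ∀ c ∈ Finset.range r, ((S.erase a).filter fun b => χ a b = c).card ≤ r ^ L - 1 := by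
        intro c hc
        have := hcon c (Finset.mem_range.1 hc)
        omega
      have := Finset.sum_le_sum hle
      rw [← hsum] at this
      simp only [Finset.sum_const, Finset.card_range, smul_eq_mul] at this
      rw [Finset.card_erase_of_mem ha] at this
      have h1 : 1 ≤ r ^ L := Nat.one_le_pow _ _ (by omega)
      have hpow : r ^ (L + 1) = r * r ^ L := by rw [pow_succ, Nat.mul_comm]
      have hmul : r * (r ^ L - 1) + r * 1 = r * r ^ L := by
        rw [← Nat.mul_add]; congr 1; omega
      rw [hpow] at hS
      omega
    obtain ⟨c0, hc0r, hc0⟩ := key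
    obtain ⟨x', c', hinj, hmem, hcr, hchain⟩ := ih _ hc0
    refine ⟨Fin.cons a x', Fin.cons c0 c', ?_, ?_, ?_, ?_⟩
    · intro i j hij
      induction i using Fin.cases with
      | zero =>
        induction j using Fin.cases with
        | zero => rfl
        | succ j =>
          exfalso
          have := hmem j
          simp only [Fin.cons_zero, Fin.cons_succ] at hij
          rw [← hij] at this
          exact (Finset.mem_erase.1 (Finset.mem_filter.1 this).1).1 rfl
      | succ i =>
        induction j using Fin.cases with
        | zero =>
          exfalso
          have := hmem i
          simp only [Fin.cons_zero, Fin.cons_succ] at hij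
          rw [hij] at this
          exact (Finset.mem_erase.1 (Finset.mem_filter.1 this).1).1 rfl
        | succ j =>
          simp only [Fin.cons_succ] at hij
          exact congrArg Fin.succ (hinj hij)
    · intro i
      induction i using Fin.cases with
      | zero => simpa using ha
      | succ i =>
        have := hmem i
        simp only [Fin.cons_succ]
        exact Finset.mem_of_mem_erase (Finset.mem_filter.1 this).1
    · intro i
      induction i using Fin.cases with
      | zero => simpa using hc0r
      | succ i => simpa using hcr i
    · intro i j hij
      induction i using Fin.cases with
      | zero =>
        induction j using Fin.cases with
        | zero => exact absurd hij (lt_irrefl _)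
        | succ j =>
          simp only [Fin.cons_zero, Fin.cons_succ]
          exact (Finset.mem_filter.1 (hmem j)).2
      | succ i =>
        induction j using Fin.cases with
        | zero => exact absurd hij (Fin.not_lt.mpr (Fin.zero_le _))
        | succ j =>
          simp only [Fin.cons_succ]
          exact hchain i j (Fin.succ_lt_succ_iff.mp hij)



/-- if every embedding of `K₄` into each `M n` has distortion at least `3/2`, then
the complete graphs `(K_k)` do not equi-bi-Lipschitzly embed into `(M_n)`: for every `C ≥ 1`
there is `k` such that for every `n`, no map `K_k → M n` satisfies
`λ ≤ d(f u, f v) ≤ C λ` on distinct points. -/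
theorem no_equi_embedding_of_complete_graphs (M : ℕ → Type*) (inst : ∀ n, MetricSpace (M n))
    (h4 : ∀ n (f : Fin 4 → M n) (C lam : ℝ), 0 < lam →
      (∀ u v : Fin 4, u ≠ v →
        lam ≤ dist (f u) (f v) ∧ dist (f u) (f v) ≤ C * lam) → (3 : ℝ) / 2 ≤ C) :
    ∀ C : ℝ, 1 ≤ C → ∃ k : ℕ, ∀ n (f : Fin k → M n) (lam : ℝ), 0 < lam →
      ¬ (∀ u v : Fin k, u ≠ v →
          lam ≤ dist (f u) (f v) ∧ dist (f u) (f v) ≤ C * lam) := by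
  classical
  intro C hC
  obtain ⟨m0, hm0⟩ : ∃ m : ℕ, C < (3 / 2 : ℝ) ^ m :=
    pow_unbounded_of_one_lt C (by norm_num)
  set m : ℕ := max 2 m0 with hmdef
  have hm2 : 2 ≤ m := le_max_left _ _
  have hm : C < (3 / 2 : ℝ) ^ m :=
    lt_of_lt_of_le hm0 (pow_le_pow_right₀ (by norm_num) (le_max_right _ _))
  refine ⟨m ^ (3 * m + 1), fun n f lam hlam hemb => ?_⟩
  set χ : Fin (m ^ (3 * m + 1)) → Fin (m ^ (3 * m + 1)) → ℕ :=
    fun u v => Nat.findGreatest (fun j => (3 / 2 : ℝ) ^ j * lam ≤ dist (f u) (f v)) (m - 1)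
    with hχdef
  have hχ : ∀ u v, χ u v < m :=
    fun u v => lt_of_le_of_lt (Nat.findGreatest_le _) (by omega)
  have hlow : ∀ u v, u ≠ v → (3 / 2 : ℝ) ^ (χ u v) * lam ≤ dist (f u) (f v) := by
    intro u v huv
    exact Nat.findGreatest_spec (P := fun j => (3 / 2 : ℝ) ^ j * lam ≤ dist (f u) (f v))
      (Nat.zero_le _) (by simpa using (hemb u v huv).1)
  have hhigh : ∀ u v, u ≠ v → dist (f u) (f v) < (3 / 2 : ℝ) ^ (χ u v + 1) * lam := by
    intro u v huv
    by_cases hle : χ u v + 1 ≤ m - 1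
    · have := Nat.findGreatest_is_greatest (P := fun j => (3 / 2 : ℝ) ^ j * lam ≤
        dist (f u) (f v)) (Nat.lt_succ_self _) hle
      exact lt_of_not_ge this
    · have hj : χ u v + 1 = m := by have := hχ u v; omega
      rw [hj]
      calc dist (f u) (f v) ≤ C * lam := (hemb u v huv).2
      _ < (3 / 2 : ℝ) ^ m * lam := by
          exact mul_lt_mul_of_pos_right hm hlam
  obtain ⟨x, c, hinj, -, hcr, hchain⟩ :=
    exists_chain m hm2 χ hχ (3 * m + 1) Finset.univ
      (by simp [Finset.card_univ])
  obtain ⟨j, hjm, hj4⟩ := Finset.exists_lt_card_fiber_of_mul_lt_card_of_maps_to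
    (s := (Finset.univ : Finset (Fin (3 * m + 1)))) (t := Finset.range m) (f := c) (n := 3)
    (fun i _ => Finset.mem_range.2 (hcr i)) (by simp [Finset.card_univ]; omega)
  obtain ⟨T, hTsub, hT4⟩ := Finset.exists_subset_card_eq
    (n := 4) (s := Finset.univ.filter fun i => c i = j) (by omega)
  set e := T.orderIsoOfFin hT4 with hedef
  set g : Fin 4 → M n := fun i => f (x ((e i : T) : Fin (3 * m + 1))) with hgdef
  set lam' : ℝ := (3 / 2 : ℝ) ^ j * lam with hlam'def
  have hlam' : 0 < lam' := mul_pos (pow_pos (by norm_num) _) hlam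
  have hcj : ∀ i : Fin 4, c ((e i : T) : Fin (3 * m + 1)) = j := by
    intro i
    have := hTsub (e i).2
    exact (Finset.mem_filter.1 this).2
  have hpair : ∀ u v : Fin 4, u < v →
      lam' ≤ dist (g u) (g v) ∧ dist (g u) (g v) < 3 / 2 * lam' := by
    intro u v huv
    have hlt : ((e u : T) : Fin (3 * m + 1)) < ((e v : T) : Fin (3 * m + 1)) := by
      exact_mod_cast e.strictMono huv
    have hne : x ((e u : T) : Fin (3 * m + 1)) ≠ x ((e v : T) : Fin (3 * m + 1)) :=
      fun h => absurd (hinj h) (ne_of_lt hlt)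
    have hcol : χ (x ((e u : T) : Fin (3 * m + 1))) (x ((e v : T) : Fin (3 * m + 1))) = j := by
      rw [hchain _ _ hlt, hcj]
    have h1 := hlow _ _ hne
    have h2 := hhigh _ _ hne
    rw [hcol] at h1 h2
    refine ⟨h1, ?_⟩
    calc dist (g u) (g v) < (3 / 2 : ℝ) ^ (j + 1) * lam := h2
    _ = 3 / 2 * lam' := by rw [hlam'def, pow_succ]; ring
  have hpair' : ∀ u v : Fin 4, u ≠ v →
      lam' ≤ dist (g u) (g v) ∧ dist (g u) (g v) < 3 / 2 * lam' := by
    intro u v huv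
    rcases lt_or_gt_of_ne huv with h | h
    · exact hpair u v h
    · rw [dist_comm]; exact hpair v u h
  set D : ℝ := Finset.univ.sup' ⟨((0 : Fin 4), (0 : Fin 4)), Finset.mem_univ _⟩
    (fun p : Fin 4 × Fin 4 => if p.1 = p.2 then lam' else dist (g p.1) (g p.2)) with hDdef
  have hD1 : lam' ≤ D := by
    have h00 := Finset.le_sup' (f := fun p : Fin 4 × Fin 4 =>
      if p.1 = p.2 then lam' else dist (g p.1) (g p.2)) (Finset.mem_univ ((0 : Fin 4), (0 : Fin 4)))
    rw [if_pos rfl] at h00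
    exact h00
  have hD2 : D < 3 / 2 * lam' := by
    rw [hDdef]; refine (Finset.sup'_lt_iff _).2 ?_
    rintro ⟨u, v⟩ -
    by_cases h : u = v
    · rw [if_pos h]
      linarith
    · simp only [if_neg h]
      exact (hpair' u v h).2
  have hfinal : (3 : ℝ) / 2 ≤ D / lam' := by
    apply h4 n g (D / lam') lam' hlam'
    intro u v huv
    refine ⟨(hpair' u v huv).1, ?_⟩
    rw [div_mul_cancel₀ _ (ne_of_gt hlam')]
    have := Finset.le_sup' (f := fun p : Fin 4 × Fin 4 =>
      if p.1 = p.2 then lam' else dist (g p.1) (g p.2)) (Finset.mem_univ (u, v))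
    rw [if_neg huv] at this
    exact this
  rw [le_div_iff₀ hlam'] at hfinal
  linarith
end

section
/- In the lamplighter graph Lam(G) over a connected graph G, the distance between (A,x) and (B,y) equals tsp_G(x, A△B, y) + |A△B|, where tsp_G(x,S,y) is the length of the shortest walk in G starting at x, ending at y, and visiting every vertex of S, and A△B is the symmetric difference. -/
open scoped symmDiff

/-- The lamplighter graph over a graph `G`: vertices are pairs (set of lamps on, position of
the lamplighter), and moves either shift the lamplighter along an edge of `G` or toggle the
lamp at the current position. -/
def Lam {V : Type*} [DecidableEq V] (G : SimpleGraph V) : SimpleGraph (Finset V × V) where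
  Adj p q := (p.1 = q.1 ∧ G.Adj p.2 q.2) ∨ (p.2 = q.2 ∧ p.1 ∆ q.1 = {p.2})
  symm := by
    constructor
    rintro ⟨A, x⟩ ⟨B, y⟩ (⟨h1, h2⟩ | ⟨h1, h2⟩)
    · exact Or.inl ⟨h1.symm, h2.symm⟩
    · exact Or.inr ⟨h1.symm, by rw [symmDiff_comm, h2, h1]⟩
  loopless := by
    constructor
    rintro ⟨A, x⟩ (⟨_, h⟩ | ⟨_, h⟩)
    · exact (G.ne_of_adj h) rfl
    · rw [symmDiff_self] at h
      exact Finset.singleton_ne_empty x h.symm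

/-- The traveling salesman functional: the length of the shortest walk in `G` from `x` to `y`
visiting every vertex of `S`. -/
noncomputable def tsp {V : Type*} (G : SimpleGraph V) (x : V) (S : Finset V) (y : V) : ℕ :=
  sInf { m | ∃ w : G.Walk x y, w.length = m ∧ ∀ s ∈ S, s ∈ w.support }

lemma symmDiff_singleton_erase {V : Type*} [DecidableEq V] {S : Finset V} {x : V}
    (h : x ∈ S) : S ∆ {x} = S.erase x := by
  ext s; simp [Finset.mem_symmDiff, Finset.mem_erase]; aesop

lemma lam_lower {V : Type*} [DecidableEq V] (G : SimpleGraph V) {p q : Finset V × V}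
    (w : (Lam G).Walk p q) :
    ∃ w' : G.Walk p.2 q.2, w'.length + (p.1 ∆ q.1).card ≤ w.length ∧
      ∀ s ∈ p.1 ∆ q.1, s ∈ w'.support := by
  induction w with
  | nil => exact ⟨.nil, by simp [symmDiff_self], by simp [symmDiff_self]⟩
  | @cons p r q h w ih =>
    obtain ⟨w₂, hl, hs⟩ := ih
    rcases h with ⟨h1, h2⟩ | ⟨h1, h2⟩
    · refine ⟨.cons h2 w₂, ?_, ?_⟩
      · simp only [SimpleGraph.Walk.length_cons, h1]
        erw [SimpleGraph.Walk.length_cons]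
        omega
      · intro s hsm
        rw [h1] at hsm
        exact List.mem_cons_of_mem _ (hs s hsm)
    · have key : p.1 ∆ q.1 = {p.2} ∆ (r.1 ∆ q.1) := by
        rw [← h2, symmDiff_assoc, symmDiff_symmDiff_cancel_left]
      have hsub : p.1 ∆ q.1 ⊆ insert p.2 (r.1 ∆ q.1) := by
        rw [key]
        intro s hsm
        have := symmDiff_le_sup (a := ({p.2} : Finset V)) (b := r.1 ∆ q.1) hsm
        simpa using this
      refine ⟨w₂.copy h1.symm rfl, ?_, ?_⟩
      · have hc : (p.1 ∆ q.1).card ≤ (r.1 ∆ q.1).card + 1 := by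
          calc (p.1 ∆ q.1).card ≤ (insert p.2 (r.1 ∆ q.1)).card := Finset.card_le_card hsub
            _ ≤ (r.1 ∆ q.1).card + 1 := Finset.card_insert_le _ _
        simp only [SimpleGraph.Walk.length_copy, SimpleGraph.Walk.length_cons]
        erw [SimpleGraph.Walk.length_cons]
        omega
      · intro s hsm
        rcases Finset.mem_insert.mp (hsub hsm) with h | h
        · subst h
          rw [SimpleGraph.Walk.support_copy, h1]
          exact w₂.start_mem_support
        · rw [SimpleGraph.Walk.support_copy]
          exact hs s h

lemma lam_upper {V : Type*} [DecidableEq V] (G : SimpleGraph V) {x y : V}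
    (w : G.Walk x y) : ∀ (A B : Finset V), (∀ s ∈ A ∆ B, s ∈ w.support) →
    ∃ W : (Lam G).Walk (A, x) (B, y), W.length ≤ w.length + (A ∆ B).card := by
  induction w with
  | @nil u =>
    intro A B hmem
    have hsub : A ∆ B ⊆ {u} := by
      intro s hsm; simpa using hmem s hsm
    rcases Finset.subset_singleton_iff.mp hsub with h | h
    · have : A = B := by rwa [← Finset.bot_eq_empty, symmDiff_eq_bot] at h
      subst this
      exact ⟨.nil, by simp [symmDiff_self]⟩
    · refine ⟨SimpleGraph.Walk.cons (v := (B, u)) (Or.inr ⟨rfl, h⟩) SimpleGraph.Walk.nil, ?_⟩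
      simp [h]
      exact le_of_eq (SimpleGraph.Walk.length_cons _ _)
  | @cons x z y hadj w ih =>
    intro A B hmem
    by_cases hx : x ∈ A ∆ B
    · set A' := A ∆ {x} with hA'
      have herase : A' ∆ B = (A ∆ B).erase x := by
        rw [hA', symmDiff_right_comm, symmDiff_singleton_erase hx]
      have hmem' : ∀ s ∈ A' ∆ B, s ∈ w.support := by
        intro s hsm
        rw [herase, Finset.mem_erase] at hsm
        have := hmem s hsm.2
        rw [SimpleGraph.Walk.support_cons, List.mem_cons] at this
        rcases this with h | h
        · exact absurd h hsm.1
        · exact h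
      obtain ⟨W, hW⟩ := ih A' B hmem'
      have hadj1 : (Lam G).Adj (A, x) (A', x) := by
        refine Or.inr ⟨rfl, ?_⟩
        rw [hA', symmDiff_symmDiff_cancel_left]
      have hadj2 : (Lam G).Adj (A', x) (A', z) := Or.inl ⟨rfl, hadj⟩
      refine ⟨.cons hadj1 (.cons hadj2 W), ?_⟩
      have hcard : (A' ∆ B).card + 1 = (A ∆ B).card := by
        rw [herase, Finset.card_erase_of_mem hx]
        exact Nat.succ_pred_eq_of_pos (Finset.card_pos.mpr ⟨x, hx⟩)
      simp only [SimpleGraph.Walk.length_cons]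
      omega
    · have hmem' : ∀ s ∈ A ∆ B, s ∈ w.support := by
        intro s hsm
        have := hmem s hsm
        rw [SimpleGraph.Walk.support_cons, List.mem_cons] at this
        rcases this with h | h
        · exact absurd (h ▸ hsm) hx
        · exact h
      obtain ⟨W, hW⟩ := ih A B hmem'
      refine ⟨SimpleGraph.Walk.cons (v := (A, z)) (Or.inl ⟨rfl, hadj⟩) W, ?_⟩
      simp only [SimpleGraph.Walk.length_cons]
      erw [SimpleGraph.Walk.length_cons]
      omega

lemma tsp_nonempty {V : Type*} [DecidableEq V] (G : SimpleGraph V) (hG : G.Connected)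
    (x y : V) (S : Finset V) :
    ∃ w : G.Walk x y, ∀ s ∈ S, s ∈ w.support := by
  induction S using Finset.induction with
  | empty => exact ⟨(hG x y).some, by simp⟩
  | @insert a S ha ih =>
    obtain ⟨w, hw⟩ := ih
    obtain ⟨p⟩ := hG y a
    refine ⟨w.append (p.append p.reverse), ?_⟩
    intro s hs
    rcases Finset.mem_insert.mp hs with h | h
    · subst h
      rw [SimpleGraph.Walk.mem_support_append_iff, SimpleGraph.Walk.mem_support_append_iff]
      exact Or.inr (Or.inl p.end_mem_support)
    · rw [SimpleGraph.Walk.mem_support_append_iff]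
      exact Or.inl (hw s h)

/-- in the lamplighter graph over a connected graph `G`, the distance between
`(A, x)` and `(B, y)` equals `tsp_G(x, A ∆ B, y) + |A ∆ B|`. -/
theorem lamplighter_dist_eq {V : Type*} [DecidableEq V] (G : SimpleGraph V)
    (hG : G.Connected) (A B : Finset V) (x y : V) :
    (Lam G).dist (A, x) (B, y) = tsp G x (A ∆ B) y + (A ∆ B).card := by
  have hne : {m | ∃ w : G.Walk x y, w.length = m ∧ ∀ s ∈ A ∆ B, s ∈ w.support}.Nonempty := by
    obtain ⟨w, hw⟩ := tsp_nonempty G hG x y (A ∆ B)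
    exact ⟨w.length, w, rfl, hw⟩
  obtain ⟨w₀, hw₀len, hw₀mem⟩ := Nat.sInf_mem hne
  obtain ⟨W, hW⟩ := lam_upper G w₀ A B hw₀mem
  have hub : (Lam G).dist (A, x) (B, y) ≤ tsp G x (A ∆ B) y + (A ∆ B).card := by
    calc (Lam G).dist (A, x) (B, y) ≤ W.length := SimpleGraph.dist_le W
      _ ≤ w₀.length + (A ∆ B).card := hW
      _ = tsp G x (A ∆ B) y + (A ∆ B).card := by rw [hw₀len]; rfl
  have hreach : (Lam G).Reachable (A, x) (B, y) := ⟨W⟩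
  obtain ⟨Wd, hWd⟩ := hreach.exists_walk_length_eq_dist
  obtain ⟨w', hlen, hmem⟩ := lam_lower G Wd
  have htsp : tsp G x (A ∆ B) y ≤ w'.length := Nat.sInf_le ⟨w', rfl, hmem⟩
  have hlb : tsp G x (A ∆ B) y + (A ∆ B).card ≤ (Lam G).dist (A, x) (B, y) := by
    rw [← hWd]
    calc tsp G x (A ∆ B) y + (A ∆ B).card ≤ w'.length + (A ∆ B).card :=
        Nat.add_le_add_right htsp _
      _ ≤ Wd.length := hlen
  omega
end

section
/- Let k, j ∈ ℕ with k > j + 3, and let u, v be vertices of the diamond graph D_k with d(u,v) ≥ 2^{k−j}. Then there exists a subdiamond D̄ isometric to D_{k−j−3} inside D_k lying between u and v, i.e., for every w ∈ D̄, d(u,w) + d(w,v) = d(u,v). -/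
/-- Replace every edge `(u,v)` of `G` by a quadrilateral `u, a, v, b`: the new vertices are
pairs (edge of `G`, boolean), each adjacent exactly to the two endpoints of its edge; the
original edges are removed. -/
def subdivideDiamond {V : Type} (G : SimpleGraph V) :
    SimpleGraph (V ⊕ (G.edgeSet × Bool)) where
  Adj x y :=
    match x, y with
    | Sum.inl u, Sum.inr e => u ∈ (e.1 : Sym2 V)
    | Sum.inr e, Sum.inl u => u ∈ (e.1 : Sym2 V)
    | _, _ => False
  symm := ⟨by rintro (u | e) (w | f) h <;> exact h⟩
  loopless := ⟨by rintro (u | e) h <;> exact h⟩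


namespace DiamondAux

open SimpleGraph Sum

variable {V : Type} {G : SimpleGraph V}

/-- distance from a point to the nearer endpoint of a `Sym2`. -/
noncomputable def edist (G : SimpleGraph V) (x : V) (e : Sym2 V) : ℕ :=
  Sym2.lift ⟨fun p q => min (G.dist x p) (G.dist x q), fun p q => by
    simp [min_comm]⟩ e

@[simp] lemma edist_mk (x p q : V) :
    edist G x s(p, q) = min (G.dist x p) (G.dist x q) := rfl

noncomputable def eedist (G : SimpleGraph V) (e f : Sym2 V) : ℕ :=
  Sym2.lift ⟨fun p q => min (edist G p f) (edist G q f), fun p q => by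
    simp [min_comm]⟩ e

@[simp] lemma eedist_mk (p q : V) (f : Sym2 V) :
    eedist G s(p, q) f = min (edist G p f) (edist G q f) := rfl

lemma edist_eq_zero_of_mem {x : V} {e : Sym2 V} (hx : x ∈ e) : edist G x e = 0 := by
  induction e using Sym2.ind with
  | _ p q =>
    rw [Sym2.mem_iff] at hx
    rcases hx with rfl | rfl <;> simp [SimpleGraph.dist_self]

lemma edist_le_of_mem {x y : V} {e : Sym2 V} (hy : y ∈ e) : edist G x e ≤ G.dist x y := by
  induction e using Sym2.ind with
  | _ p q =>
    rw [Sym2.mem_iff] at hy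
    rcases hy with rfl | rfl <;> simp [min_le_left, min_le_right]

lemma exists_edist {x : V} (e : Sym2 V) : ∃ p, p ∈ e ∧ edist G x e = G.dist x p := by
  induction e using Sym2.ind with
  | _ p q =>
    rcases le_total (G.dist x p) (G.dist x q) with h | h
    · exact ⟨p, by simp, by simp [min_eq_left h]⟩
    · exact ⟨q, by simp, by simp [min_eq_right h]⟩

lemma exists_eedist (e f : Sym2 V) : ∃ p, p ∈ e ∧ eedist G e f = edist G p f := by
  induction e using Sym2.ind with
  | _ p q =>
    rcases le_total (edist G p f) (edist G q f) with h | h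
    · exact ⟨p, by simp, by simp [min_eq_left h]⟩
    · exact ⟨q, by simp, by simp [min_eq_right h]⟩

lemma eedist_le_of_mem {x : V} {e f : Sym2 V} (hx : x ∈ e) : eedist G e f ≤ edist G x f := by
  induction e using Sym2.ind with
  | _ p q =>
    rw [Sym2.mem_iff] at hx
    rcases hx with rfl | rfl <;> simp [min_le_left, min_le_right]

lemma dist_le_one_of_mem_edge (hG : G.Connected) {e : Sym2 V} (he : e ∈ G.edgeSet)
    {x p : V} (hx : x ∈ e) (hp : p ∈ e) : G.dist x p ≤ 1 := by
  induction e using Sym2.ind with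
  | _ a b =>
    rw [SimpleGraph.mem_edgeSet] at he
    rw [Sym2.mem_iff] at hx hp
    rcases hx with rfl | rfl <;> rcases hp with rfl | rfl
    · simp [SimpleGraph.dist_self]
    · exact le_of_eq (SimpleGraph.dist_eq_one_iff_adj.mpr he)
    · exact le_of_eq (SimpleGraph.dist_eq_one_iff_adj.mpr he.symm)
    · simp [SimpleGraph.dist_self]

lemma edist_triangle (hG : G.Connected) (x y : V) (f : Sym2 V) :
    edist G x f ≤ G.dist x y + edist G y f := by
  induction f using Sym2.ind with
  | _ p q =>
    simp only [edist_mk]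
    rcases le_total (G.dist y p) (G.dist y q) with h | h
    · rw [min_eq_left h]
      exact le_trans (min_le_left _ _) hG.dist_triangle
    · rw [min_eq_right h]
      exact le_trans (min_le_right _ _) hG.dist_triangle


open Classical in
/-- The claimed distance in the subdivided graph. -/
noncomputable def lb (G : SimpleGraph V) :
    (V ⊕ (G.edgeSet × Bool)) → (V ⊕ (G.edgeSet × Bool)) → ℕ
  | .inl x, .inl y => 2 * G.dist x y
  | .inl x, .inr f => 2 * edist G x f.1.1 + 1
  | .inr e, .inl y => 2 * edist G y e.1.1 + 1
  | .inr e, .inr f => if e = f then 0 else 2 * eedist G e.1.1 f.1.1 + 2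

lemma lb_self (A : V ⊕ (G.edgeSet × Bool)) : lb G A A = 0 := by
  rcases A with x | e <;> simp [lb, SimpleGraph.dist_self]

lemma lb_step (hG : G.Connected) {A C : V ⊕ (G.edgeSet × Bool)}
    (h : (subdivideDiamond G).Adj A C) (B : V ⊕ (G.edgeSet × Bool)) :
    lb G A B ≤ lb G C B + 1 := by
  rcases A with x | e <;> rcases C with x' | e'
  · exact absurd h (by simp [subdivideDiamond])
  · -- A = inl x, C = inr e'
    have hx : x ∈ (e'.1.1 : Sym2 V) := h
    rcases B with y | f
    · -- need 2 * dist x y ≤ 2 * edist y e' + 2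
      show 2 * G.dist x y ≤ 2 * edist G y e'.1.1 + 1 + 1
      obtain ⟨p, hp, hval⟩ := exists_edist (G := G) (x := y) e'.1.1
      have h1 : G.dist x p ≤ 1 := dist_le_one_of_mem_edge hG e'.1.2 hx hp
      have h2 : G.dist x y ≤ G.dist x p + G.dist p y := hG.dist_triangle
      have h3 : G.dist p y = G.dist y p := SimpleGraph.dist_comm ..
      omega
    · show lb G (inl x) (inr f) ≤ lb G (inr e') (inr f) + 1
      by_cases hef : e' = f
      · subst hef
        simp only [lb, if_pos rfl]
        have : edist G x e'.1.1 = 0 := edist_eq_zero_of_mem hx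
        omega
      · simp only [lb, if_neg hef]
        obtain ⟨p, hp, hval⟩ := exists_eedist (G := G) e'.1.1 f.1.1
        have h1 : G.dist x p ≤ 1 := dist_le_one_of_mem_edge hG e'.1.2 hx hp
        have h2 : edist G x f.1.1 ≤ G.dist x p + edist G p f.1.1 := edist_triangle hG ..
        omega
  · -- A = inr e, C = inl x'
    have hx : x' ∈ (e.1.1 : Sym2 V) := h
    rcases B with y | f
    · show 2 * edist G y e.1.1 + 1 ≤ 2 * G.dist x' y + 1
      have := edist_le_of_mem (G := G) (x := y) hx
      have h3 : G.dist y x' = G.dist x' y := SimpleGraph.dist_comm ..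
      omega
    · by_cases hef : e = f
      · subst hef
        rw [lb_self]
        omega
      · simp only [lb, if_neg hef]
        have := eedist_le_of_mem (G := G) (f := f.1.1) hx
        omega
  · exact absurd h (by simp [subdivideDiamond])

lemma lb_le_length (hG : G.Connected) {A B : V ⊕ (G.edgeSet × Bool)}
    (w : (subdivideDiamond G).Walk A B) : lb G A B ≤ w.length := by
  induction w with
  | nil => simp [lb_self]
  | @cons a b c h w ih =>
    rw [SimpleGraph.Walk.length_cons]
    have := lb_step hG h c
    omega

def liftWalk : ∀ {x y : V}, G.Walk x y → (subdivideDiamond G).Walk (inl x) (inl y)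
  | _, _, .nil => .nil
  | x, _, .cons (v := z) h w =>
      .cons (show (subdivideDiamond G).Adj (inl x) (inr (⟨s(x, z), h⟩, true)) from
          Sym2.mem_mk_left x z)
        (.cons (show (subdivideDiamond G).Adj (inr (⟨s(x, z), h⟩, true)) (inl z) from
          Sym2.mem_mk_right x z) (liftWalk w))

@[simp] lemma liftWalk_length : ∀ {x y : V} (w : G.Walk x y),
    (liftWalk w).length = 2 * w.length
  | _, _, .nil => rfl
  | _, _, .cons h w => by
      show (liftWalk w).length + 1 + 1 = _
      rw [liftWalk_length w]
      simp [SimpleGraph.Walk.length_cons]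
      ring

lemma dist_inl_inl_le (hG : G.Connected) (x y : V) :
    (subdivideDiamond G).dist (inl x) (inl y) ≤ 2 * G.dist x y := by
  obtain ⟨w, hw⟩ := hG.exists_walk_length_eq_dist x y
  have := SimpleGraph.dist_le (liftWalk w)
  rwa [liftWalk_length, hw] at this

lemma dist_le_lb (hG : G.Connected) (A B : V ⊕ (G.edgeSet × Bool)) :
    (subdivideDiamond G).dist A B ≤ lb G A B := by
  rcases A with x | e <;> rcases B with y | f
  · exact dist_inl_inl_le hG x y
  · -- inl x to inr f
    show _ ≤ 2 * edist G x f.1.1 + 1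
    obtain ⟨p, hp, hval⟩ := exists_edist (G := G) (x := x) f.1.1
    obtain ⟨w, hw⟩ := hG.exists_walk_length_eq_dist x p
    have hadj : (subdivideDiamond G).Adj (inl p) (inr f) := hp
    have := SimpleGraph.dist_le ((liftWalk w).concat hadj)
    rw [SimpleGraph.Walk.length_concat, liftWalk_length, hw] at this
    omega
  · show _ ≤ 2 * edist G y e.1.1 + 1
    obtain ⟨p, hp, hval⟩ := exists_edist (G := G) (x := y) e.1.1
    obtain ⟨w, hw⟩ := hG.exists_walk_length_eq_dist p y
    have hadj : (subdivideDiamond G).Adj (inr e) (inl p) := hp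
    have := SimpleGraph.dist_le (.cons hadj (liftWalk w))
    rw [SimpleGraph.Walk.length_cons, liftWalk_length, hw] at this
    have hc : G.dist p y = G.dist y p := SimpleGraph.dist_comm ..
    omega
  · by_cases hef : e = f
    · subst hef
      simp [lb_self, SimpleGraph.dist_self]
    · show _ ≤ lb G (inr e) (inr f)
      simp only [lb, if_neg hef]
      obtain ⟨p, hp, hv1⟩ := exists_eedist (G := G) e.1.1 f.1.1
      obtain ⟨q, hq, hv2⟩ := exists_edist (G := G) (x := p) f.1.1
      obtain ⟨w, hw⟩ := hG.exists_walk_length_eq_dist p q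
      have hadj1 : (subdivideDiamond G).Adj (inr e) (inl p) := hp
      have hadj2 : (subdivideDiamond G).Adj (inl q) (inr f) := hq
      have := SimpleGraph.dist_le ((SimpleGraph.Walk.cons hadj1 (liftWalk w)).concat hadj2)
      rw [SimpleGraph.Walk.length_concat, SimpleGraph.Walk.length_cons,
        liftWalk_length, hw] at this
      omega

lemma subdivide_connected (hG : G.Connected) : (subdivideDiamond G).Connected := by
  have hne : Nonempty V := hG.nonempty
  obtain ⟨v₀⟩ := hne
  rw [SimpleGraph.connected_iff]
  refine ⟨fun A B => ?_, ⟨inl v₀⟩⟩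
  have key : ∀ C : V ⊕ (G.edgeSet × Bool), (subdivideDiamond G).Reachable C (inl v₀) := by
    intro C
    rcases C with x | e
    · exact ⟨liftWalk ((hG x v₀).some)⟩
    · obtain ⟨p, hp, _⟩ := exists_edist (G := G) (x := v₀) e.1.1
      have hadj : (subdivideDiamond G).Adj (inr e) (inl p) := hp
      exact (hadj.reachable).trans ⟨liftWalk ((hG p v₀).some)⟩
  exact (key A).trans (key B).symm

theorem subdivide_dist (hG : G.Connected) (A B : V ⊕ (G.edgeSet × Bool)) :
    (subdivideDiamond G).dist A B = lb G A B := by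
  refine le_antisymm (dist_le_lb hG A B) ?_
  obtain ⟨w, hw⟩ := ((subdivide_connected hG) A B).exists_walk_length_eq_dist
  rw [← hw]
  exact lb_le_length hG w

end DiamondAux

/-- The diamond graphs: `D₀` is a single edge (the complete graph on two vertices), and
`D_{k+1}` is obtained from `D_k` by replacing each edge by a quadrilateral. -/
def DSig : ℕ → Σ V : Type, SimpleGraph V
  | 0 => ⟨Bool, ⊤⟩
  | k + 1 => ⟨_, subdivideDiamond (DSig k).2⟩

/-- The vertex set of the diamond graph `D_k`. -/
def DV (k : ℕ) : Type := (DSig k).1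

/-- The diamond graph `D_k`. -/
def DG (k : ℕ) : SimpleGraph (DV k) := (DSig k).2


namespace DiamondAux

open SimpleGraph Sum

lemma DG_connected : ∀ k, (DG k).Connected
  | 0 => by
    rw [SimpleGraph.connected_iff]
    refine ⟨fun a b => ?_, ⟨(false : Bool)⟩⟩
    by_cases h : a = b
    · exact h ▸ SimpleGraph.Reachable.refl a
    · exact SimpleGraph.Adj.reachable (by exact h)
  | k + 1 => subdivide_connected (DG_connected k)

lemma Ddist_inl_inl (k : ℕ) (x y : DV k) :
    (DG (k+1)).dist (Sum.inl x) (Sum.inl y) = 2 * (DG k).dist x y :=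
  subdivide_dist (DG_connected k) (Sum.inl x) (Sum.inl y)

lemma Ddist_inl_inr (k : ℕ) (x : DV k) (f : (DG k).edgeSet × Bool) :
    (DG (k+1)).dist (Sum.inl x) (Sum.inr f) = 2 * edist (DG k) x f.1.1 + 1 :=
  subdivide_dist (DG_connected k) (Sum.inl x) (Sum.inr f)

lemma Ddist_inr_inl (k : ℕ) (e : (DG k).edgeSet × Bool) (y : DV k) :
    (DG (k+1)).dist (Sum.inr e) (Sum.inl y) = 2 * edist (DG k) y e.1.1 + 1 :=
  subdivide_dist (DG_connected k) (Sum.inr e) (Sum.inl y)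

lemma Ddist_inr_inr (k : ℕ) (e f : (DG k).edgeSet × Bool) (h : e ≠ f) :
    (DG (k+1)).dist (Sum.inr e) (Sum.inr f) = 2 * eedist (DG k) e.1.1 f.1.1 + 2 := by
  refine Eq.trans (subdivide_dist (DG_connected k) (Sum.inr e) (Sum.inr f)) ?_
  simp only [lb, if_neg h]


lemma DG_succ (k : ℕ) : DG (k+1) = subdivideDiamond (DG k) := rfl

def incl : ∀ (k n : ℕ), DV k → DV (k + n)
  | _, 0 => id
  | k, n+1 => Sum.inl ∘ incl k n

def term : ∀ n : ℕ, Bool → DV n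
  | 0 => fun b => b
  | n+1 => fun b => Sum.inl (term n b)

@[simp] lemma term_succ (n : ℕ) (b : Bool) : term (n+1) b = Sum.inl (term n b) := rfl

@[simp] lemma incl_succ (k n : ℕ) (x : DV k) :
    incl k (n+1) x = Sum.inl (incl k n x) := rfl

@[simp] lemma incl_zero (k : ℕ) (x : DV k) : incl k 0 x = x := rfl

lemma dist_incl (k n : ℕ) (x y : DV k) :
    (DG (k+n)).dist (incl k n x) (incl k n y) = 2^n * (DG k).dist x y := by
  induction n with
  | zero => simp
  | succ n ih =>
    show (DG ((k+n)+1)).dist (Sum.inl (incl k n x)) (Sum.inl (incl k n y)) = _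
    rw [Ddist_inl_inl, ih, pow_succ]
    ring

lemma DV0_cases (p : DV 0) : p = term 0 false ∨ p = term 0 true := Bool.dichotomy p

lemma DG0_adj {a b : DV 0} : (DG 0).Adj a b ↔ a ≠ b := SimpleGraph.top_adj _ _

lemma DG0_dist_ft : (DG 0).dist (term 0 false) (term 0 true) = 1 :=
  SimpleGraph.dist_eq_one_iff_adj.mpr (DG0_adj.mpr (by exact Bool.false_ne_true))

lemma adj_dist_term_ne : ∀ (n : ℕ) (p q : DV n), (DG n).Adj p q →
    (DG n).dist (term n false) p ≠ (DG n).dist (term n false) q := by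
  intro n
  match n with
  | 0 =>
    intro p q h
    have hpq : p ≠ q := h.ne
    rcases DV0_cases p with rfl | rfl <;> rcases DV0_cases q with rfl | rfl
    · exact absurd rfl hpq
    · rw [SimpleGraph.dist_self, DG0_dist_ft]; omega
    · rw [SimpleGraph.dist_self, DG0_dist_ft]; omega
    · exact absurd rfl hpq
  | n + 1 =>
    rintro (x | e) (y | f) h
    · exact absurd h (by rw [DG_succ]; simp [subdivideDiamond])
    · erw [term_succ, Ddist_inl_inl, Ddist_inl_inr]; omega
    · erw [term_succ, Ddist_inl_inr, Ddist_inl_inl]; omega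
    · exact absurd h (by rw [DG_succ]; simp [subdivideDiamond])

lemma dist_term : ∀ (n : ℕ) (w : DV n),
    (DG n).dist (term n false) w + (DG n).dist w (term n true) = 2^n := by
  intro n
  induction n with
  | zero =>
    intro w
    rcases DV0_cases w with rfl | rfl
    · rw [SimpleGraph.dist_self, DG0_dist_ft]
      norm_num
    · rw [SimpleGraph.dist_self, DG0_dist_ft]
      norm_num
  | succ n ih =>
    rintro (x | f)
    · erw [term_succ, term_succ, Ddist_inl_inl, Ddist_inl_inl, pow_succ]
      have := ih x
      omega
    · erw [term_succ, term_succ, Ddist_inl_inr, Ddist_inr_inl]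
      obtain ⟨⟨E, hE⟩, b⟩ := f
      dsimp only
      revert hE
      induction E using Sym2.ind with
      | _ p q =>
        intro hE
        have hpq : (DG n).Adj p q := hE
        have h1 := ih p
        have h2 := ih q
        have hne := adj_dist_term_ne n p q hpq
        have e1 : (DG n).dist p q = 1 := SimpleGraph.dist_eq_one_iff_adj.mpr hpq
        have e2 : (DG n).dist q p = 1 := SimpleGraph.dist_eq_one_iff_adj.mpr hpq.symm
        have t1 : (DG n).dist (term n false) q ≤ (DG n).dist (term n false) p + (DG n).dist p q :=
          (DG_connected n).dist_triangle
        have t2 : (DG n).dist (term n false) p ≤ (DG n).dist (term n false) q + (DG n).dist q p :=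
          (DG_connected n).dist_triangle
        have c1 : (DG n).dist (term n true) p = (DG n).dist p (term n true) :=
          SimpleGraph.dist_comm ..
        have c2 : (DG n).dist (term n true) q = (DG n).dist q (term n true) :=
          SimpleGraph.dist_comm ..
        erw [edist_mk, edist_mk, pow_succ]
        omega


def subdivideHom {V W : Type} {G : SimpleGraph V} {H : SimpleGraph W} (f : G →g H) :
    subdivideDiamond G →g subdivideDiamond H where
  toFun := Sum.map f (fun p => (f.mapEdgeSet p.1, p.2))
  map_rel' := by
    rintro (x | e) (y | f') h
    · exact h.elim
    · exact Sym2.mem_map.mpr ⟨x, h, rfl⟩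
    · exact Sym2.mem_map.mpr ⟨y, h, rfl⟩
    · exact h.elim

def phi {m : ℕ} {s t : DV m} (h : (DG m).Adj s t) : ∀ n : ℕ, DG n →g DG (m + n)
  | 0 =>
    { toFun := fun b => bif (b : Bool) then t else s
      map_rel' := by
        intro a b hab
        have hne : a ≠ b := hab.ne
        rcases DV0_cases a with rfl | rfl <;> rcases DV0_cases b with rfl | rfl
        · exact absurd rfl hne
        · exact h
        · exact h.symm
        · exact absurd rfl hne }
  | n+1 => subdivideHom (phi h n)

@[simp] lemma phi_succ_inl {m : ℕ} {s t : DV m} (h : (DG m).Adj s t) (n : ℕ) (x : DV n) :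
    phi h (n+1) (Sum.inl x) = Sum.inl (phi h n x) := rfl

@[simp] lemma phi_succ_inr {m : ℕ} {s t : DV m} (h : (DG m).Adj s t) (n : ℕ)
    (e : (DG n).edgeSet) (b : Bool) :
    phi h (n+1) (Sum.inr (e, b)) = Sum.inr ((phi h n).mapEdgeSet e, b) := rfl

lemma phi_term {m : ℕ} {s t : DV m} (h : (DG m).Adj s t) : ∀ (n : ℕ) (b : Bool),
    phi h n (term n b) = incl m n (bif b then t else s)
  | 0, b => rfl
  | n+1, b => congrArg Sum.inl (phi_term h n b)

lemma edist_hom {V W : Type} {G : SimpleGraph V} {H : SimpleGraph W} (φ : V → W)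
    (hiso : ∀ a b, H.dist (φ a) (φ b) = G.dist a b) (x : V) (E : Sym2 V) :
    edist H (φ x) (Sym2.map φ E) = edist G x E := by
  induction E using Sym2.ind with
  | _ p q => rw [Sym2.map_pair_eq, edist_mk, edist_mk, hiso, hiso]

lemma eedist_hom {V W : Type} {G : SimpleGraph V} {H : SimpleGraph W} (φ : V → W)
    (hiso : ∀ a b, H.dist (φ a) (φ b) = G.dist a b) (E F : Sym2 V) :
    eedist H (Sym2.map φ E) (Sym2.map φ F) = eedist G E F := by
  induction E using Sym2.ind with
  | _ p q =>
    rw [Sym2.map_pair_eq, eedist_mk, eedist_mk, edist_hom φ hiso, edist_hom φ hiso]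

lemma phi_isom {m : ℕ} {s t : DV m} (h : (DG m).Adj s t) : ∀ (n : ℕ) (a b : DV n),
    (DG (m + n)).dist (phi h n a) (phi h n b) = (DG n).dist a b := by
  intro n
  induction n with
  | zero =>
    intro a b
    rcases DV0_cases a with rfl | rfl <;> rcases DV0_cases b with rfl | rfl
    · rw [SimpleGraph.dist_self, SimpleGraph.dist_self]
    · rw [DG0_dist_ft]
      exact SimpleGraph.dist_eq_one_iff_adj.mpr h
    · rw [show (DG 0).dist (term 0 true) (term 0 false) = (DG 0).dist (term 0 false) (term 0 true)
        from SimpleGraph.dist_comm .., DG0_dist_ft]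
      exact SimpleGraph.dist_eq_one_iff_adj.mpr h.symm
    · rw [SimpleGraph.dist_self, SimpleGraph.dist_self]
  | succ n ih =>
    have hinj : Function.Injective (phi h n) := by
      intro a b hab
      have h0 : (DG n).dist a b = 0 := by rw [← ih a b, hab, SimpleGraph.dist_self]
      exact ((DG_connected n).dist_eq_zero_iff).mp h0
    have hcoe : ∀ g : (DG n).edgeSet, ((phi h n).mapEdgeSet g).1 = Sym2.map (phi h n) g.1 :=
      fun g => rfl
    rintro (x | ⟨e, b⟩) (y | ⟨f, c⟩)
    · show (DG ((m+n)+1)).dist (Sum.inl (phi h n x)) (Sum.inl (phi h n y))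
        = (DG (n+1)).dist (Sum.inl x) (Sum.inl y)
      erw [Ddist_inl_inl, Ddist_inl_inl, ih]
    · show (DG ((m+n)+1)).dist (Sum.inl (phi h n x)) (Sum.inr ((phi h n).mapEdgeSet f, c))
        = (DG (n+1)).dist (Sum.inl x) (Sum.inr (f, c))
      erw [Ddist_inl_inr, Ddist_inl_inr]
      dsimp only
      erw [hcoe, edist_hom _ ih]
    · show (DG ((m+n)+1)).dist (Sum.inr ((phi h n).mapEdgeSet e, b)) (Sum.inl (phi h n y))
        = (DG (n+1)).dist (Sum.inr (e, b)) (Sum.inl y)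
      erw [Ddist_inr_inl, Ddist_inr_inl]
      dsimp only
      erw [hcoe, edist_hom _ ih]
    · have hmapinj : Function.Injective ((phi h n).mapEdgeSet) := by
        intro a b hab
        refine Subtype.ext (Sym2.map.injective hinj ?_)
        have := congrArg Subtype.val hab
        rw [hcoe, hcoe] at this
        exact this
      by_cases hef : (⟨e, b⟩ : (DG n).edgeSet × Bool) = (f, c)
      · obtain ⟨he, hb⟩ := Prod.ext_iff.mp hef
        subst he; subst hb
        show (DG ((m+n)+1)).dist (Sum.inr ((phi h n).mapEdgeSet e, b))
            (Sum.inr ((phi h n).mapEdgeSet e, b)) = (DG (n+1)).dist (Sum.inr (e, b)) (Sum.inr (e, b))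
        erw [SimpleGraph.dist_self, SimpleGraph.dist_self]
      · have hne' : (⟨(phi h n).mapEdgeSet e, b⟩ : (DG (m+n)).edgeSet × Bool)
            ≠ ((phi h n).mapEdgeSet f, c) := by
          intro hc
          obtain ⟨h1, h2⟩ := Prod.ext_iff.mp hc
          exact hef (Prod.ext_iff.mpr ⟨hmapinj h1, h2⟩)
        show (DG ((m+n)+1)).dist (Sum.inr ((phi h n).mapEdgeSet e, b))
            (Sum.inr ((phi h n).mapEdgeSet f, c)) = (DG (n+1)).dist (Sum.inr (e, b)) (Sum.inr (f, c))
        erw [Ddist_inr_inr _ _ _ hne', Ddist_inr_inr _ _ _ hef]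
        dsimp only
        erw [hcoe, hcoe, eedist_hom _ ih]


lemma proj (k : ℕ) (u v : DV (k+1)) (hd : 1 ≤ (DG (k+1)).dist u v) :
    ∃ u' : DV k, (DG (k+1)).dist u (Sum.inl u') ≤ 1 ∧
      (DG (k+1)).dist u (Sum.inl u') + (DG (k+1)).dist (Sum.inl u') v
        = (DG (k+1)).dist u v := by
  rcases u with x | e
  · refine ⟨x, ?_, ?_⟩ <;> erw [SimpleGraph.dist_self] <;> omega
  · rcases v with y | f
    · obtain ⟨p, hp, hval⟩ := exists_edist (G := DG k) (x := y) e.1.1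
      refine ⟨p, ?_, ?_⟩
      · erw [Ddist_inr_inl, edist_eq_zero_of_mem hp]
      · erw [Ddist_inr_inl, Ddist_inr_inl, Ddist_inl_inl, edist_eq_zero_of_mem hp, hval]
        have : (DG k).dist p y = (DG k).dist y p := SimpleGraph.dist_comm ..
        omega
    · have hne : e ≠ f := by
        intro hc
        subst hc
        erw [SimpleGraph.dist_self] at hd
        omega
      obtain ⟨p, hp, hv1⟩ := exists_eedist (G := DG k) e.1.1 f.1.1
      refine ⟨p, ?_, ?_⟩
      · erw [Ddist_inr_inl, edist_eq_zero_of_mem hp]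
      · erw [Ddist_inr_inl, Ddist_inl_inr, Ddist_inr_inr _ _ _ hne, edist_eq_zero_of_mem hp, hv1]
        omega

lemma crossing : ∀ (n m : ℕ) (u v : DV (m + n)), 3 * 2^n - 2 ≤ (DG (m+n)).dist u v →
    ∃ s t : DV m, (DG m).Adj s t ∧
      (DG (m+n)).dist u (incl m n s) + 2^n + (DG (m+n)).dist (incl m n t) v
        = (DG (m+n)).dist u v := by
  intro n
  induction n with
  | zero =>
    intro m u v hd
    norm_num at hd
    obtain ⟨w, hw⟩ := ((DG_connected (m+0)) u v).exists_walk_length_eq_dist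
    cases w with
    | nil =>
      rw [← hw] at hd
      simp at hd
    | @cons _ b _ hadj w' =>
      refine ⟨u, b, hadj, ?_⟩
      have hlen : w'.length + 1 = (DG (m+0)).dist u v := by
        rw [← hw, SimpleGraph.Walk.length_cons]
      have h2 : (DG (m+0)).dist u v ≤ (DG (m+0)).dist u b + (DG (m+0)).dist b v :=
        (DG_connected _).dist_triangle
      have h3 : (DG (m+0)).dist u b ≤ 1 :=
        le_of_eq (SimpleGraph.dist_eq_one_iff_adj.mpr hadj)
      have h4 : (DG (m+0)).dist b v ≤ w'.length := SimpleGraph.dist_le w'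
      show (DG (m+0)).dist u u + 2^0 + (DG (m+0)).dist b v = (DG (m+0)).dist u v
      rw [SimpleGraph.dist_self, pow_zero]
      omega
  | succ n ih =>
    intro m u v hd
    have hP : (1:ℕ) ≤ 2^n := Nat.one_le_two_pow
    replace hd : 3 * (2^n * 2) - 2 ≤ (DG ((m+n)+1)).dist u v := by
      rw [pow_succ] at hd
      exact hd
    have hd1 : 1 ≤ (DG ((m+n)+1)).dist u v := by omega
    obtain ⟨u', hu1, hu2⟩ := proj (m+n) u v hd1
    have hcomm0 : (DG ((m+n)+1)).dist v (Sum.inl u') = (DG ((m+n)+1)).dist (Sum.inl u') v :=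
      SimpleGraph.dist_comm ..
    have hd2 : 1 ≤ (DG ((m+n)+1)).dist v (Sum.inl u') := by omega
    obtain ⟨v', hv1, hv2⟩ := proj (m+n) v (Sum.inl u') hd2
    have hDD : (DG ((m+n)+1)).dist (Sum.inl v') (Sum.inl u') = 2 * (DG (m+n)).dist v' u' :=
      Ddist_inl_inl ..
    have hcomm1 : (DG (m+n)).dist v' u' = (DG (m+n)).dist u' v' := SimpleGraph.dist_comm ..
    have hIH : 3 * 2^n - 2 ≤ (DG (m+n)).dist u' v' := by omega
    obtain ⟨S, T, hST, heq⟩ := ih m u' v' hIH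
    refine ⟨S, T, hST, ?_⟩
    have hST1 : (DG m).dist S T = 1 := SimpleGraph.dist_eq_one_iff_adj.mpr hST
    have hmid := dist_incl m (n+1) S T
    rw [hST1, mul_one, pow_succ] at hmid
    replace hmid : (DG ((m+n)+1)).dist (Sum.inl (incl m n S)) (Sum.inl (incl m n T))
        = 2^n * 2 := hmid
    have hA : (DG ((m+n)+1)).dist u (Sum.inl (incl m n S)) ≤
        (DG ((m+n)+1)).dist u (Sum.inl u')
          + (DG ((m+n)+1)).dist (Sum.inl u') (Sum.inl (incl m n S)) :=
      (DG_connected _).dist_triangle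
    have hA2 : (DG ((m+n)+1)).dist (Sum.inl u') (Sum.inl (incl m n S))
        = 2 * (DG (m+n)).dist u' (incl m n S) := Ddist_inl_inl ..
    have hB : (DG ((m+n)+1)).dist (Sum.inl (incl m n T)) v ≤
        (DG ((m+n)+1)).dist (Sum.inl (incl m n T)) (Sum.inl v')
          + (DG ((m+n)+1)).dist (Sum.inl v') v :=
      (DG_connected _).dist_triangle
    have hB2 : (DG ((m+n)+1)).dist (Sum.inl (incl m n T)) (Sum.inl v')
        = 2 * (DG (m+n)).dist (incl m n T) v' := Ddist_inl_inl ..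
    have hcomm2 : (DG ((m+n)+1)).dist (Sum.inl v') v = (DG ((m+n)+1)).dist v (Sum.inl v') :=
      SimpleGraph.dist_comm ..
    have htr1 : (DG ((m+n)+1)).dist u v ≤
        (DG ((m+n)+1)).dist u (Sum.inl (incl m n S))
          + (DG ((m+n)+1)).dist (Sum.inl (incl m n S)) v :=
      (DG_connected _).dist_triangle
    have htr2 : (DG ((m+n)+1)).dist (Sum.inl (incl m n S)) v ≤
        (DG ((m+n)+1)).dist (Sum.inl (incl m n S)) (Sum.inl (incl m n T))
          + (DG ((m+n)+1)).dist (Sum.inl (incl m n T)) v :=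
      (DG_connected _).dist_triangle
    rw [pow_succ]
    show (DG ((m+n)+1)).dist u (Sum.inl (incl m n S)) + 2^n * 2
        + (DG ((m+n)+1)).dist (Sum.inl (incl m n T)) v = (DG ((m+n)+1)).dist u v
    omega

end DiamondAux

/-- if `k > j + 3` and `u, v` are vertices of the diamond `D_k` with
`d(u,v) ≥ 2^(k-j)`, then there is a subdiamond isometric to `D_{k-j-3}` lying between `u`
and `v`: an isometric embedding `ι : D_{k-j-3} → D_k` such that every point of its image is
metrically between `u` and `v`. -/
theorem subdiamond_between (k j : ℕ) (hkj : j + 3 < k) (u v : DV k)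
    (huv : 2 ^ (k - j) ≤ (DG k).dist u v) :
    ∃ ι : DV (k - j - 3) → DV k,
      (∀ a b : DV (k - j - 3), (DG k).dist (ι a) (ι b) = (DG (k - j - 3)).dist a b) ∧
        ∀ w : DV (k - j - 3), (DG k).dist u (ι w) + (DG k).dist (ι w) v = (DG k).dist u v := by
  open DiamondAux in
  obtain ⟨l, rfl⟩ : ∃ l, k = (j + 3) + l := ⟨k - (j + 3), by omega⟩
  rw [show j + 3 + l - j - 3 = l from by omega]
  rw [show j + 3 + l - j = l + 3 from by omega] at huv
  have hP : (1:ℕ) ≤ 2^l := Nat.one_le_two_pow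
  have hd : 3 * 2^l - 2 ≤ (DG (j + 3 + l)).dist u v := by
    rw [pow_add] at huv
    have h8 : (2:ℕ)^3 = 8 := rfl
    omega
  obtain ⟨S, T, hST, heq⟩ := DiamondAux.crossing l (j+3) u v hd
  refine ⟨DiamondAux.phi hST l, DiamondAux.phi_isom hST l, ?_⟩
  intro w
  have e1 : DiamondAux.phi hST l (DiamondAux.term l false) = DiamondAux.incl (j+3) l S :=
    DiamondAux.phi_term hST l false
  have e2 : DiamondAux.phi hST l (DiamondAux.term l true) = DiamondAux.incl (j+3) l T :=
    DiamondAux.phi_term hST l true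
  have h1 : (DG (j+3+l)).dist (DiamondAux.incl (j+3) l S) (DiamondAux.phi hST l w)
      + (DG (j+3+l)).dist (DiamondAux.phi hST l w) (DiamondAux.incl (j+3) l T) = 2^l := by
    rw [← e1, ← e2, DiamondAux.phi_isom, DiamondAux.phi_isom]
    exact DiamondAux.dist_term l w
  have htr1 : (DG (j+3+l)).dist u v ≤ (DG (j+3+l)).dist u (DiamondAux.phi hST l w)
      + (DG (j+3+l)).dist (DiamondAux.phi hST l w) v :=
    (DiamondAux.DG_connected _).dist_triangle
  have htr2 : (DG (j+3+l)).dist u (DiamondAux.phi hST l w) ≤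
      (DG (j+3+l)).dist u (DiamondAux.incl (j+3) l S)
        + (DG (j+3+l)).dist (DiamondAux.incl (j+3) l S) (DiamondAux.phi hST l w) :=
    (DiamondAux.DG_connected _).dist_triangle
  have htr3 : (DG (j+3+l)).dist (DiamondAux.phi hST l w) v ≤
      (DG (j+3+l)).dist (DiamondAux.phi hST l w) (DiamondAux.incl (j+3) l T)
        + (DG (j+3+l)).dist (DiamondAux.incl (j+3) l T) v :=
    (DiamondAux.DG_connected _).dist_triangle
  omega
end
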